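/- Let δ ∈ {α₁,α₂,α̃} and ε ∈ {0,1}, so that E = H_{δ,ε} is an edge of the fundamental δ-root strip. Let 𝒞 be a chamber lying on the opposite side of E from the strip, i.e., 𝒞 ⊆ {v : (δ,v) > 1} if ε = 1 and 𝒞 ⊆ {v : (δ,v) < 0} if ε = 0 (there are exactly three such chambers). Let z ∈ W with zq ∈ 𝒞, and set z′ = s_{δ,ε}z. Then ℓ(z′) < ℓ(z), so z′ < z in the Bruhat order. More precisely: if E ∩ cl(A₀) is a single point which equals the vertex of 𝒞, then ℓ(z′) = ℓ(z) − 3; in all other cases ℓ(z′) = ℓ(z) − 1 (in particular whenever a wall of 𝒞 lies on E). -/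

import Mathlib

noncomputable section

open scoped RealInnerProductSpace

/-- The plane `V = ℝ²`. -/
abbrev V : Type := EuclideanSpace ℝ (Fin 2)

/-- The affine reflection in the hyperplane `H_{α,k}`. -/
def sRefl (α : V) (k : ℤ) (v : V) : V := v - (⟪α, v⟫ - (k : ℝ)) • α

/-- The positive roots `α₁, α₂, α̃ = α₁ + α₂` of the `A₂` root system. -/
def PosRoots (a1 a2 : V) : Set V := {a1, a2, a1 + a2}

/-- The root system `Φ` of type `A₂`. -/
def Phi (a1 a2 : V) : Set V := {α | α ∈ PosRoots a1 a2 ∨ -α ∈ PosRoots a1 a2}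

/-- A permutation of `V` acting as the affine reflection `s_{α,k}` for some `α ∈ Φ`, `k ∈ ℤ`. -/
def IsAffRefl (a1 a2 : V) (g : Equiv.Perm V) : Prop :=
  ∃ α ∈ Phi a1 a2, ∃ k : ℤ, ∀ v : V, g v = sRefl α k v

/-- The affine Weyl group of type `Ã₂`: the group of (affine) transformations of `V`
generated by all the affine reflections `s_{α,k}`, `α ∈ Φ`, `k ∈ ℤ`. -/
def AffWeyl (a1 a2 : V) : Subgroup (Equiv.Perm V) :=
  Subgroup.closure {g | IsAffRefl a1 a2 g}

/-- The action of an element of the affine Weyl group on the plane `V`. -/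
def act {a1 a2 : V} (w : AffWeyl a1 a2) (v : V) : V := (w : Equiv.Perm V) v

/-- `g` is one of the simple reflections `s₁ = s_{α₁,0}`, `s₂ = s_{α₂,0}`, `s₀ = s_{α̃,1}`. -/
def IsSimpleRefl (a1 a2 : V) (g : Equiv.Perm V) : Prop :=
  (∀ v : V, g v = sRefl a1 0 v) ∨ (∀ v : V, g v = sRefl a2 0 v) ∨
    (∀ v : V, g v = sRefl (a1 + a2) 1 v)

/-- The length function of the affine Weyl group `W` of type `Ã₂`, with respect to the
simple reflections. -/
def len (a1 a2 : V) (w : AffWeyl a1 a2) : ℕ :=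
  sInf {n | ∃ l : List (AffWeyl a1 a2),
    (∀ g ∈ l, IsSimpleRefl a1 a2 (g : Equiv.Perm V)) ∧ l.length = n ∧ l.prod = w}

/-- The reflections of `W` are the `s_{α,k}`, `α ∈ Φ`, `k ∈ ℤ`. -/
def IsReflW (a1 a2 : V) (g : Equiv.Perm V) : Prop := IsAffRefl a1 a2 g

/-- The Bruhat order on `W`: the partial order generated by `u < r * u` whenever `r` is a
reflection and `ℓ(u) < ℓ(r * u)`. -/
def BruhatLE (a1 a2 : V) (x w : AffWeyl a1 a2) : Prop :=
  Relation.ReflTransGen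
    (fun a b => ∃ r : AffWeyl a1 a2, IsReflW a1 a2 (r : Equiv.Perm V) ∧ b = r * a ∧
      len a1 a2 a < len a1 a2 b) x w

/-- The strict Bruhat order. -/
def BruhatLT (a1 a2 : V) (x w : AffWeyl a1 a2) : Prop := BruhatLE a1 a2 x w ∧ x ≠ w

/-- The fundamental alcove `A₀`. -/
def A0 (a1 a2 : V) : Set V :=
  {v | 0 < ⟪a1, v⟫ ∧ 0 < ⟪a2, v⟫ ∧ ⟪a1 + a2, v⟫ < 1}

/-- The fundamental `α`-root strip. -/
def Strip (α : V) : Set V := {v | 0 ≤ ⟪α, v⟫ ∧ ⟪α, v⟫ ≤ 1}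

/-- The union of the three fundamental root strips. -/
def StripUnion (a1 a2 : V) : Set V := Strip a1 ∪ Strip a2 ∪ Strip (a1 + a2)

/-- `w` is spiral if the alcove center `w q` lies in a fundamental root strip. -/
def IsSpiral (a1 a2 q : V) (w : AffWeyl a1 a2) : Prop :=
  (w : Equiv.Perm V) q ∈ StripUnion a1 a2

/-- The chambers: connected components of the complement of the union of the fundamental
root strips. -/
def IsChamber (a1 a2 : V) (C : Set V) : Prop :=
  ∃ v ∈ (StripUnion a1 a2)ᶜ, C = connectedComponentIn (StripUnion a1 a2)ᶜ v

/-- The chamber containing the alcove center `w q` (for non-spiral `w`). -/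
def chamberOf (a1 a2 q : V) (w : AffWeyl a1 a2) : Set V :=
  connectedComponentIn (StripUnion a1 a2)ᶜ ((w : Equiv.Perm V) q)

/-- The root hyperplane (line) `H_{α,k}`. -/
def Hplane (α : V) (k : ℤ) : Set V := {v | ⟪α, v⟫ = (k : ℝ)}

/-- `H_{α,i}` (with `α` a positive root and `i ∈ {0,1}`) is a wall of the chamber `C`:
the boundary of `C` meets `H_{α,i}` in more than one point (a ray). -/
def IsWall (a1 a2 : V) (C : Set V) (α : V) (i : ℤ) : Prop :=
  α ∈ PosRoots a1 a2 ∧ (i = 0 ∨ i = 1) ∧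
    ∃ u ∈ frontier C ∩ Hplane α i, ∃ v ∈ frontier C ∩ Hplane α i, u ≠ v

/-- A chamber is even if both of its walls are among the fixed hyperplanes
`H_{α₁,0}, H_{α₂,0}, H_{α̃,1}` of the simple reflections. -/
def IsEvenChamber (a1 a2 : V) (C : Set V) : Prop :=
  IsChamber a1 a2 C ∧ ∀ α i, IsWall a1 a2 C α i →
    ((α = a1 ∧ i = 0) ∨ (α = a2 ∧ i = 0) ∨ (α = a1 + a2 ∧ i = 1))

/-- `q^w_x = n^w_x - ℓ(w)`, where `n^w_x` is the number of reflections `r` with `r x ≤ w`. -/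
def qInt (a1 a2 : V) (w x : AffWeyl a1 a2) : ℤ :=
  (Set.ncard {r : AffWeyl a1 a2 |
      IsReflW a1 a2 (r : Equiv.Perm V) ∧ BruhatLE a1 a2 (r * x) w} : ℤ)
    - (len a1 a2 w : ℤ)

/-- The root `α ∈ Φ` points into the chamber `C`. -/
def PointsInto (a1 a2 : V) (C : Set V) (α : V) : Prop :=
  α ∈ Phi a1 a2 ∧ ∀ v ∈ C, v + α ∈ C

/-- `L(w)`: the subgroup generated by the simple reflections `s` with `s w < w`. -/
def Lsub (a1 a2 : V) (w : AffWeyl a1 a2) : Subgroup (AffWeyl a1 a2) :=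
  Subgroup.closure {s | IsSimpleRefl a1 a2 (s : Equiv.Perm V) ∧ BruhatLT a1 a2 (s * w) w}

/-- `w` is twisted spiral if `w = z s` with `z` spiral of even length, `s` simple, and
`ℓ(w) = ℓ(z) + 1`. -/
def IsTwistedSpiral (a1 a2 q : V) (w : AffWeyl a1 a2) : Prop :=
  ∃ z s : AffWeyl a1 a2, IsSpiral a1 a2 q z ∧ Even (len a1 a2 z) ∧
    IsSimpleRefl a1 a2 (s : Equiv.Perm V) ∧ w = z * s ∧ len a1 a2 w = len a1 a2 z + 1

/-! ### Auxiliary development -/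

section Aux

/-- Bundled hypotheses on the root data. -/
structure Setup (a1 a2 q : V) : Prop where
  n1 : ⟪a1, a1⟫ = 2
  n2 : ⟪a2, a2⟫ = 2
  h12 : ⟪a1, a2⟫ = -1
  q1 : ⟪a1, q⟫ = 1/3
  q2 : ⟪a2, q⟫ = 1/3

namespace Setup

variable {a1 a2 q : V} (S : Setup a1 a2 q)

include S

lemma h21 : ⟪a2, a1⟫ = -1 := by rw [real_inner_comm]; exact S.h12

lemma X_s1 (k : ℤ) (v : V) : ⟪a1, sRefl a1 k v⟫ = 2*k - ⟪a1, v⟫ := by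
  simp only [sRefl, inner_sub_right, real_inner_smul_right, S.n1]; ring

lemma Y_s1 (k : ℤ) (v : V) : ⟪a2, sRefl a1 k v⟫ = ⟪a1, v⟫ + ⟪a2, v⟫ - k := by
  simp only [sRefl, inner_sub_right, real_inner_smul_right, S.h21]; ring

lemma X_s2 (k : ℤ) (v : V) : ⟪a1, sRefl a2 k v⟫ = ⟪a1, v⟫ + ⟪a2, v⟫ - k := by
  simp only [sRefl, inner_sub_right, real_inner_smul_right, S.h12]; ring

lemma Y_s2 (k : ℤ) (v : V) : ⟪a2, sRefl a2 k v⟫ = 2*k - ⟪a2, v⟫ := by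
  simp only [sRefl, inner_sub_right, real_inner_smul_right, S.n2]; ring

lemma X_s3 (k : ℤ) (v : V) : ⟪a1, sRefl (a1+a2) k v⟫ = k - ⟪a2, v⟫ := by
  simp only [sRefl, inner_sub_right, real_inner_smul_right, inner_add_right, inner_add_left,
    S.n1, S.h12, S.h21]; ring

lemma Y_s3 (k : ℤ) (v : V) : ⟪a2, sRefl (a1+a2) k v⟫ = k - ⟪a1, v⟫ := by
  simp only [sRefl, inner_sub_right, real_inner_smul_right, inner_add_right, inner_add_left,
    S.n2, S.h12, S.h21]; ring

lemma pair_inj {u v : V} (h1 : ⟪a1, u⟫ = ⟪a1, v⟫) (h2 : ⟪a2, u⟫ = ⟪a2, v⟫) : u = v := by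
  have hli : LinearIndependent ℝ ![a1, a2] := by
    rw [LinearIndependent.pair_iff]
    intro s t hst
    have e1 : ⟪a1, s • a1 + t • a2⟫ = (0:ℝ) := by rw [hst, inner_zero_right]
    have e2 : ⟪a2, s • a1 + t • a2⟫ = (0:ℝ) := by rw [hst, inner_zero_right]
    simp only [inner_add_right, real_inner_smul_right, S.n1, S.n2, S.h12, S.h21] at e1 e2
    constructor <;> linarith
  have hsp : Submodule.span ℝ (Set.range ![a1, a2]) = ⊤ :=
    hli.span_eq_top_of_card_eq_finrank (by simp [finrank_euclideanSpace_fin])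
  have hd : u - v ∈ Submodule.span ℝ (Set.range ![a1, a2]) := by rw [hsp]; trivial
  obtain ⟨c, hc⟩ := (Submodule.mem_span_range_iff_exists_fun ℝ).mp hd
  rw [Fin.sum_univ_two] at hc
  simp only [Matrix.cons_val_zero, Matrix.cons_val_one, Matrix.head_cons] at hc
  have e1 : ⟪a1, u - v⟫ = (0:ℝ) := by rw [inner_sub_right, h1, sub_self]
  have e2 : ⟪a2, u - v⟫ = (0:ℝ) := by rw [inner_sub_right, h2, sub_self]
  have e0 : ⟪u - v, u - v⟫ = (0:ℝ) := by
    nth_rewrite 1 [← hc]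
    rw [inner_add_left, real_inner_smul_left, real_inner_smul_left, e1, e2]; ring
  exact sub_eq_zero.mp (inner_self_eq_zero.mp e0)

end Setup

end Aux
section Aux2

/-- Alcove centers: barycenters of the alcoves, in root coordinates. -/
def Alc (a1 a2 v : V) : Prop :=
  ∃ m n : ℤ, (⟪a1, v⟫ = m + 1/3 ∧ ⟪a2, v⟫ = n + 1/3) ∨ (⟪a1, v⟫ = m + 2/3 ∧ ⟪a2, v⟫ = n + 2/3)

/-- The number of hyperplanes separating the alcove with center `v` from `A₀`. -/
def Nv (a1 a2 v : V) : ℕ :=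
  ⌊⟪a1, v⟫⌋.natAbs + ⌊⟪a2, v⟫⌋.natAbs + ⌊⟪a1, v⟫ + ⟪a2, v⟫⌋.natAbs

lemma floor13 (m : ℤ) : ⌊(m:ℝ) + 1/3⌋ = m := by rw [Int.floor_intCast_add]; norm_num
lemma floor23 (m : ℤ) : ⌊(m:ℝ) + 2/3⌋ = m := by rw [Int.floor_intCast_add]; norm_num

lemma Nv1 {a1 a2 v : V} (m n : ℤ) (h1 : ⟪a1, v⟫ = m + 1/3) (h2 : ⟪a2, v⟫ = n + 1/3) :
    Nv a1 a2 v = m.natAbs + n.natAbs + (m+n).natAbs := by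
  unfold Nv; rw [h1, h2,
    show (m:ℝ)+1/3 + ((n:ℝ)+1/3) = ((m+n:ℤ):ℝ)+2/3 by push_cast; ring,
    floor13, floor13, floor23]

lemma Nv2 {a1 a2 v : V} (m n : ℤ) (h1 : ⟪a1, v⟫ = m + 2/3) (h2 : ⟪a2, v⟫ = n + 2/3) :
    Nv a1 a2 v = m.natAbs + n.natAbs + (m+n+1).natAbs := by
  unfold Nv; rw [h1, h2,
    show (m:ℝ)+2/3 + ((n:ℝ)+2/3) = ((m+n+1:ℤ):ℝ)+1/3 by push_cast; ring,
    floor23, floor23, floor13]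

lemma sRefl_neg (α : V) (k : ℤ) (v : V) : sRefl (-α) k v = sRefl α (-k) v := by
  simp only [sRefl, inner_neg_left, smul_neg, neg_smul]
  push_cast; module

lemma sRefl_invol {α : V} (hα : ⟪α, α⟫ = 2) (k : ℤ) : Function.Involutive (sRefl α k) := by
  intro v
  simp only [sRefl, inner_sub_right, real_inner_smul_right, hα]
  module

lemma sRefl_step (α : V) (k : ℤ) (v : V) : sRefl α (k+1) v = sRefl α k v + α := by
  simp only [sRefl]; push_cast; module

namespace Setup

variable {a1 a2 q : V} (S : Setup a1 a2 q)

include S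

lemma norm_posroot {δ : V} (hδ : δ ∈ PosRoots a1 a2) : ⟪δ, δ⟫ = 2 := by
  simp only [PosRoots, Set.mem_insert_iff, Set.mem_singleton_iff] at hδ
  rcases hδ with rfl | rfl | rfl
  · exact S.n1
  · exact S.n2
  · simp only [inner_add_left, inner_add_right, S.n1, S.n2, S.h12, S.h21]; ring

lemma norm_phi {α : V} (hα : α ∈ Phi a1 a2) : ⟪α, α⟫ = 2 := by
  rcases hα with h | h
  · exact S.norm_posroot h
  · have := S.norm_posroot h; rwa [inner_neg_neg] at this

lemma alc_q : Alc a1 a2 q :=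
  ⟨0, 0, Or.inl ⟨by rw [S.q1]; norm_num, by rw [S.q2]; norm_num⟩⟩

lemma alc_sRefl {δ : V} (hδ : δ = a1 ∨ δ = a2 ∨ δ = a1 + a2) (k : ℤ) {v : V}
    (hv : Alc a1 a2 v) : Alc a1 a2 (sRefl δ k v) := by
  obtain ⟨m, n, ⟨h1, h2⟩ | ⟨h1, h2⟩⟩ := hv <;> rcases hδ with rfl | rfl | rfl
  · exact ⟨2*k-m-1, m+n-k, Or.inr ⟨by rw [S.X_s1]; push_cast; linarith,
      by rw [S.Y_s1]; push_cast; linarith⟩⟩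
  · exact ⟨m+n-k, 2*k-n-1, Or.inr ⟨by rw [S.X_s2]; push_cast; linarith,
      by rw [S.Y_s2]; push_cast; linarith⟩⟩
  · exact ⟨k-n-1, k-m-1, Or.inr ⟨by rw [S.X_s3]; push_cast; linarith,
      by rw [S.Y_s3]; push_cast; linarith⟩⟩
  · exact ⟨2*k-m-1, m+n-k+1, Or.inl ⟨by rw [S.X_s1]; push_cast; linarith,
      by rw [S.Y_s1]; push_cast; linarith⟩⟩
  · exact ⟨m+n-k+1, 2*k-n-1, Or.inl ⟨by rw [S.X_s2]; push_cast; linarith,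
      by rw [S.Y_s2]; push_cast; linarith⟩⟩
  · exact ⟨k-n-1, k-m-1, Or.inl ⟨by rw [S.X_s3]; push_cast; linarith,
      by rw [S.Y_s3]; push_cast; linarith⟩⟩

lemma alc_affRefl {g : Equiv.Perm V} (hg : IsAffRefl a1 a2 g) {v : V}
    (hv : Alc a1 a2 v) : Alc a1 a2 (g v) := by
  obtain ⟨α, hα, k, hk⟩ := hg
  rw [hk v]
  rcases hα with h | h
  · simp only [PosRoots, Set.mem_insert_iff, Set.mem_singleton_iff] at h
    exact S.alc_sRefl h k hv
  · simp only [PosRoots, Set.mem_insert_iff, Set.mem_singleton_iff] at h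
    have hα : α = -a1 ∨ α = -a2 ∨ α = -(a1 + a2) := by
      rcases h with h | h | h
      · left; rw [← h, neg_neg]
      · right; left; rw [← h, neg_neg]
      · right; right; rw [← h, neg_neg]
    rcases hα with rfl | rfl | rfl
    · rw [sRefl_neg]; exact S.alc_sRefl (Or.inl rfl) _ hv
    · rw [sRefl_neg]; exact S.alc_sRefl (Or.inr (Or.inl rfl)) _ hv
    · rw [sRefl_neg]; exact S.alc_sRefl (Or.inr (Or.inr rfl)) _ hv

lemma nv_simple_le {g : Equiv.Perm V} (hg : IsSimpleRefl a1 a2 g) {v : V}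
    (hv : Alc a1 a2 v) : Nv a1 a2 (g v) ≤ Nv a1 a2 v + 1 := by
  obtain ⟨m, n, ⟨h1, h2⟩ | ⟨h1, h2⟩⟩ := hv <;> rcases hg with hg | hg | hg <;> rw [hg v]
  · rw [Nv2 (-m-1) (m+n) (by rw [S.X_s1]; push_cast; linarith)
      (by rw [S.Y_s1]; push_cast; linarith), Nv1 m n h1 h2]; omega
  · rw [Nv2 (m+n) (-n-1) (by rw [S.X_s2]; push_cast; linarith)
      (by rw [S.Y_s2]; push_cast; linarith), Nv1 m n h1 h2]; omega
  · rw [Nv2 (-n) (-m) (by rw [S.X_s3]; push_cast; linarith)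
      (by rw [S.Y_s3]; push_cast; linarith), Nv1 m n h1 h2]; omega
  · rw [Nv1 (-m-1) (m+n+1) (by rw [S.X_s1]; push_cast; linarith)
      (by rw [S.Y_s1]; push_cast; linarith), Nv2 m n h1 h2]; omega
  · rw [Nv1 (m+n+1) (-n-1) (by rw [S.X_s2]; push_cast; linarith)
      (by rw [S.Y_s2]; push_cast; linarith), Nv2 m n h1 h2]; omega
  · rw [Nv1 (-n) (-m) (by rw [S.X_s3]; push_cast; linarith)
      (by rw [S.Y_s3]; push_cast; linarith), Nv2 m n h1 h2]; omega

lemma descent {v : V} (hv : Alc a1 a2 v) (h0 : Nv a1 a2 v ≠ 0) :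
    ∃ δ k, (δ = a1 ∧ k = (0:ℤ) ∨ δ = a2 ∧ k = 0 ∨ δ = a1 + a2 ∧ k = 1) ∧
      Nv a1 a2 (sRefl δ k v) + 1 = Nv a1 a2 v := by
  obtain ⟨m, n, ⟨h1, h2⟩ | ⟨h1, h2⟩⟩ := hv
  · rcases lt_trichotomy m 0 with hm | hm | hm
    · refine ⟨a1, 0, Or.inl ⟨rfl, rfl⟩, ?_⟩
      rw [Nv2 (-m-1) (m+n) (by rw [S.X_s1]; push_cast; linarith)
        (by rw [S.Y_s1]; push_cast; linarith), Nv1 m n h1 h2]; omega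
    all_goals rcases lt_trichotomy n 0 with hn | hn | hn
    all_goals try {
      refine ⟨a2, 0, Or.inr (Or.inl ⟨rfl, rfl⟩), ?_⟩
      rw [Nv2 (m+n) (-n-1) (by rw [S.X_s2]; push_cast; linarith)
        (by rw [S.Y_s2]; push_cast; linarith), Nv1 m n h1 h2]; omega }
    all_goals {
      refine ⟨a1+a2, 1, Or.inr (Or.inr ⟨rfl, rfl⟩), ?_⟩
      rw [Nv2 (-n) (-m) (by rw [S.X_s3]; push_cast; linarith)
        (by rw [S.Y_s3]; push_cast; linarith), Nv1 m n h1 h2]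
      rw [Nv1 m n h1 h2] at h0; omega }
  · rcases lt_trichotomy m 0 with hm | hm | hm
    · refine ⟨a1, 0, Or.inl ⟨rfl, rfl⟩, ?_⟩
      rw [Nv1 (-m-1) (m+n+1) (by rw [S.X_s1]; push_cast; linarith)
        (by rw [S.Y_s1]; push_cast; linarith), Nv2 m n h1 h2]; omega
    all_goals rcases lt_trichotomy n 0 with hn | hn | hn
    all_goals try {
      refine ⟨a2, 0, Or.inr (Or.inl ⟨rfl, rfl⟩), ?_⟩
      rw [Nv1 (m+n+1) (-n-1) (by rw [S.X_s2]; push_cast; linarith)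
        (by rw [S.Y_s2]; push_cast; linarith), Nv2 m n h1 h2]; omega }
    all_goals {
      refine ⟨a1+a2, 1, Or.inr (Or.inr ⟨rfl, rfl⟩), ?_⟩
      rw [Nv1 (-n) (-m) (by rw [S.X_s3]; push_cast; linarith)
        (by rw [S.Y_s3]; push_cast; linarith), Nv2 m n h1 h2]; omega }

end Setup

end Aux2
section Aux3

/-- The affine reflection as a permutation. -/
def sPerm (α : V) (hα : ⟪α, α⟫ = 2) (k : ℤ) : Equiv.Perm V :=
  (sRefl_invol hα k).toPerm

@[simp] lemma sPerm_apply (α : V) (hα : ⟪α, α⟫ = 2) (k : ℤ) (v : V) :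
    sPerm α hα k v = sRefl α k v := rfl

/-- The subgroup generated by the simple reflections. -/
def SC (a1 a2 : V) : Subgroup (Equiv.Perm V) := Subgroup.closure {g | IsSimpleRefl a1 a2 g}

namespace Setup

variable {a1 a2 q : V} (S : Setup a1 a2 q)

include S

lemma posroot3 : a1 + a2 ∈ PosRoots a1 a2 := by
  have := S.n1; simp [PosRoots]

lemma n3 : ⟪a1+a2, a1+a2⟫ = 2 := S.norm_posroot S.posroot3

lemma phi1 : a1 ∈ Phi a1 a2 := Or.inl (by simp [PosRoots])
lemma phi2 : a2 ∈ Phi a1 a2 := by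
  have := S.n1; exact Or.inl (by simp [PosRoots])
lemma phi3 : a1 + a2 ∈ Phi a1 a2 := Or.inl S.posroot3

lemma mem1 : sPerm a1 S.n1 0 ∈ SC a1 a2 :=
  Subgroup.subset_closure (Or.inl fun _ => rfl)
lemma mem2 : sPerm a2 S.n2 0 ∈ SC a1 a2 :=
  Subgroup.subset_closure (Or.inr (Or.inl fun _ => rfl))
lemma mem0 : sPerm (a1+a2) S.n3 1 ∈ SC a1 a2 :=
  Subgroup.subset_closure (Or.inr (Or.inr fun _ => rfl))

lemma I1 (v : V) : sRefl a2 0 (sRefl (a1+a2) 1 (sRefl a2 0 v)) = sRefl a1 1 v := by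
  simp only [sRefl, inner_sub_right, inner_add_left, inner_add_right, real_inner_smul_right,
    S.n1, S.n2, S.h12, S.h21, smul_sub, smul_add, smul_smul]
  push_cast; module

lemma I2 (v : V) : sRefl a1 0 (sRefl (a1+a2) 1 (sRefl a1 0 v)) = sRefl a2 1 v := by
  simp only [sRefl, inner_sub_right, inner_add_left, inner_add_right, real_inner_smul_right,
    S.n1, S.n2, S.h12, S.h21, smul_sub, smul_add, smul_smul]
  push_cast; module

lemma I3 (v : V) : sRefl a1 0 (sRefl a2 0 (sRefl a1 0 v)) = sRefl (a1+a2) 0 v := by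
  simp only [sRefl, inner_sub_right, inner_add_left, inner_add_right, real_inner_smul_right,
    S.n1, S.n2, S.h12, S.h21, smul_sub, smul_add, smul_smul]
  push_cast; module

lemma mem1' : sPerm a1 S.n1 1 ∈ SC a1 a2 := by
  have h : sPerm a1 S.n1 1 = sPerm a2 S.n2 0 * sPerm (a1+a2) S.n3 1 * sPerm a2 S.n2 0 :=
    Equiv.ext fun v => by
      simp only [Equiv.Perm.mul_apply, sPerm_apply]; exact (S.I1 v).symm
  rw [h]; exact mul_mem (mul_mem S.mem2 S.mem0) S.mem2

lemma mem2' : sPerm a2 S.n2 1 ∈ SC a1 a2 := by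
  have h : sPerm a2 S.n2 1 = sPerm a1 S.n1 0 * sPerm (a1+a2) S.n3 1 * sPerm a1 S.n1 0 :=
    Equiv.ext fun v => by
      simp only [Equiv.Perm.mul_apply, sPerm_apply]; exact (S.I2 v).symm
  rw [h]; exact mul_mem (mul_mem S.mem1 S.mem0) S.mem1

lemma mem0' : sPerm (a1+a2) S.n3 0 ∈ SC a1 a2 := by
  have h : sPerm (a1+a2) S.n3 0 = sPerm a1 S.n1 0 * sPerm a2 S.n2 0 * sPerm a1 S.n1 0 :=
    Equiv.ext fun v => by
      simp only [Equiv.Perm.mul_apply, sPerm_apply]; exact (S.I3 v).symm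
  rw [h]; exact mul_mem (mul_mem S.mem1 S.mem2) S.mem1

omit S in
lemma sPerm_k_mem {a1 a2 : V} {δ : V} (hδ2 : ⟪δ, δ⟫ = 2)
    (h0 : sPerm δ hδ2 0 ∈ SC a1 a2) (h1 : sPerm δ hδ2 1 ∈ SC a1 a2) :
    ∀ k : ℤ, sPerm δ hδ2 k ∈ SC a1 a2 := by
  have hstep : ∀ k : ℤ, sPerm δ hδ2 (k+1) = (sPerm δ hδ2 1 * sPerm δ hδ2 0) * sPerm δ hδ2 k := by
    intro k; apply Equiv.ext; intro v
    simp only [Equiv.Perm.mul_apply, sPerm_apply]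
    rw [sRefl_step]
    generalize sRefl δ k v = w
    simp only [sRefl, inner_sub_right, real_inner_smul_right, hδ2]
    push_cast; module
  intro k
  induction k using Int.induction_on with
  | zero => exact h0
  | succ i ih => rw [hstep]; exact mul_mem (mul_mem h1 h0) ih
  | pred i ih =>
    have key : sPerm δ hδ2 (-(i:ℤ)) = (sPerm δ hδ2 1 * sPerm δ hδ2 0) * sPerm δ hδ2 (-(i:ℤ)-1) := by
      have := hstep (-(i:ℤ)-1); rwa [sub_add_cancel] at this
    have h2 : sPerm δ hδ2 (-(i:ℤ)-1)
        = (sPerm δ hδ2 1 * sPerm δ hδ2 0)⁻¹ * sPerm δ hδ2 (-(i:ℤ)) := by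
      rw [key, inv_mul_cancel_left]
    rw [h2]; exact mul_mem (inv_mem (mul_mem h1 h0)) ih

lemma affWeyl_le_SC : AffWeyl a1 a2 ≤ SC a1 a2 := by
  rw [AffWeyl, Subgroup.closure_le]
  rintro g ⟨α, hα, k, hk⟩
  have hg : g = sPerm α (S.norm_phi hα) k := Equiv.ext fun v => hk v
  rw [SetLike.mem_coe, hg]
  rcases hα with h | h
  · simp only [PosRoots, Set.mem_insert_iff, Set.mem_singleton_iff] at h
    rcases h with rfl | rfl | rfl
    · exact sPerm_k_mem S.n1 S.mem1 S.mem1' k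
    · exact sPerm_k_mem S.n2 S.mem2 S.mem2' k
    · exact sPerm_k_mem S.n3 S.mem0' S.mem0 k
  · simp only [PosRoots, Set.mem_insert_iff, Set.mem_singleton_iff] at h
    have hα' : α = -a1 ∨ α = -a2 ∨ α = -(a1 + a2) := by
      rcases h with h | h | h
      · left; rw [← h, neg_neg]
      · right; left; rw [← h, neg_neg]
      · right; right; rw [← h, neg_neg]
    rcases hα' with rfl | rfl | rfl
    · have e : sPerm (-a1) (S.norm_phi (Or.inr h)) k = sPerm a1 S.n1 (-k) :=
        Equiv.ext fun v => sRefl_neg a1 k v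
      rw [e]; exact sPerm_k_mem S.n1 S.mem1 S.mem1' (-k)
    · have e : sPerm (-a2) (S.norm_phi (Or.inr h)) k = sPerm a2 S.n2 (-k) :=
        Equiv.ext fun v => sRefl_neg a2 k v
      rw [e]; exact sPerm_k_mem S.n2 S.mem2 S.mem2' (-k)
    · have e : sPerm (-(a1+a2)) (S.norm_phi (Or.inr h)) k = sPerm (a1+a2) S.n3 (-k) :=
        Equiv.ext fun v => sRefl_neg (a1+a2) k v
      rw [e]; exact sPerm_k_mem S.n3 S.mem0' S.mem0 (-k)

end Setup

end Aux3
section Aux4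

lemma prod_reverse_invol {G : Type*} [Group G] :
    ∀ l : List G, (∀ x ∈ l, x * x = 1) → l.reverse.prod * l.prod = 1 := by
  intro l
  induction l with
  | nil => simp
  | cons a t ih =>
    intro h
    have ha := h a List.mem_cons_self
    have ht := ih fun x hx => h x (List.mem_cons_of_mem a hx)
    simp only [List.reverse_cons, List.prod_append, List.prod_cons, List.prod_nil, mul_one]
    calc t.reverse.prod * a * (a * t.prod) = t.reverse.prod * (a * a) * t.prod := by group
    _ = 1 := by rw [ha, mul_one]; exact ht

namespace Setup

variable {a1 a2 q : V} (S : Setup a1 a2 q)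

include S

lemma simple_isAffRefl {g : Equiv.Perm V} (hg : IsSimpleRefl a1 a2 g) : IsAffRefl a1 a2 g := by
  rcases hg with h | h | h
  · exact ⟨a1, S.phi1, 0, h⟩
  · exact ⟨a2, S.phi2, 0, h⟩
  · exact ⟨a1 + a2, S.phi3, 1, h⟩

lemma simple_sq {x : AffWeyl a1 a2} (hx : IsSimpleRefl a1 a2 (x : Equiv.Perm V)) :
    x * x = 1 := by
  apply Subtype.ext
  apply Equiv.ext
  intro v
  simp only [Subgroup.coe_mul, Equiv.Perm.mul_apply, OneMemClass.coe_one, Equiv.Perm.one_apply]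
  rcases hx with h | h | h <;> rw [h, h]
  · exact sRefl_invol S.n1 0 v
  · exact sRefl_invol S.n2 0 v
  · exact sRefl_invol S.n3 1 v

lemma exists_word (w : AffWeyl a1 a2) :
    ∃ l : List (AffWeyl a1 a2), (∀ x ∈ l, IsSimpleRefl a1 a2 (x : Equiv.Perm V)) ∧
      l.prod = w := by
  have hw : (w : Equiv.Perm V) ∈ SC a1 a2 := S.affWeyl_le_SC w.2
  have main : ∀ g ∈ SC a1 a2, ∃ l : List (AffWeyl a1 a2),
      (∀ x ∈ l, IsSimpleRefl a1 a2 (x : Equiv.Perm V)) ∧ ((l.prod : Equiv.Perm V) = g) := by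
    intro g hg
    induction hg using Subgroup.closure_induction with
    | mem x hx =>
      exact ⟨[⟨x, Subgroup.subset_closure (S.simple_isAffRefl hx)⟩], by simpa using hx, by simp⟩
    | one => exact ⟨[], by simp, by simp⟩
    | mul x y hx hy ihx ihy =>
      obtain ⟨lx, hlx, hpx⟩ := ihx
      obtain ⟨ly, hly, hpy⟩ := ihy
      refine ⟨lx ++ ly, ?_, ?_⟩
      · intro t ht; rcases List.mem_append.mp ht with h | h
        · exact hlx t h
        · exact hly t h
      · rw [List.prod_append, Subgroup.coe_mul, hpx, hpy]
    | inv x hx ihx =>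
      obtain ⟨l, hl, hp⟩ := ihx
      refine ⟨l.reverse, fun t ht => hl t (List.mem_reverse.mp ht), ?_⟩
      have hinv : l.reverse.prod * l.prod = 1 :=
        prod_reverse_invol l fun t ht => S.simple_sq (hl t ht)
      have : l.reverse.prod = (l.prod)⁻¹ := eq_inv_of_mul_eq_one_left hinv
      rw [this]
      rw [← hp]
      simp
  obtain ⟨l, hl, hp⟩ := main _ hw
  exact ⟨l, hl, Subtype.ext hp⟩

lemma len_set_nonempty (w : AffWeyl a1 a2) :
    {n | ∃ l : List (AffWeyl a1 a2),
      (∀ g ∈ l, IsSimpleRefl a1 a2 (g : Equiv.Perm V)) ∧ l.length = n ∧ l.prod = w}.Nonempty := by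
  obtain ⟨l, hl, hp⟩ := S.exists_word w
  exact ⟨l.length, l, hl, rfl, hp⟩

omit S in
lemma len_le_word {w : AffWeyl a1 a2} {l : List (AffWeyl a1 a2)}
    (hl : ∀ g ∈ l, IsSimpleRefl a1 a2 (g : Equiv.Perm V)) (hp : l.prod = w) :
    len a1 a2 w ≤ l.length := Nat.sInf_le ⟨l, hl, rfl, hp⟩

lemma len_spec (w : AffWeyl a1 a2) :
    ∃ l : List (AffWeyl a1 a2), (∀ g ∈ l, IsSimpleRefl a1 a2 (g : Equiv.Perm V)) ∧
      l.length = len a1 a2 w ∧ l.prod = w :=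
  Nat.sInf_mem (S.len_set_nonempty w)

lemma alc_list (l : List (AffWeyl a1 a2))
    (hl : ∀ x ∈ l, IsSimpleRefl a1 a2 (x : Equiv.Perm V)) :
    Alc a1 a2 ((l.prod : Equiv.Perm V) q) := by
  induction l with
  | nil => simpa using S.alc_q
  | cons x t ih =>
    have hx := hl x List.mem_cons_self
    have ht := ih fun y hy => hl y (List.mem_cons_of_mem x hy)
    simp only [List.prod_cons, Subgroup.coe_mul, Equiv.Perm.mul_apply]
    exact S.alc_affRefl (S.simple_isAffRefl hx) ht

lemma alc_act (w : AffWeyl a1 a2) : Alc a1 a2 (act w q) := by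
  obtain ⟨l, hl, hp⟩ := S.exists_word w
  have := S.alc_list l hl
  rwa [hp] at this

lemma nv_le_word (l : List (AffWeyl a1 a2))
    (hl : ∀ x ∈ l, IsSimpleRefl a1 a2 (x : Equiv.Perm V)) :
    Nv a1 a2 ((l.prod : Equiv.Perm V) q) ≤ l.length := by
  induction l with
  | nil =>
    simp only [List.prod_nil, OneMemClass.coe_one, Equiv.Perm.one_apply, List.length_nil]
    rw [Nv1 0 0 (by rw [S.q1]; norm_num) (by rw [S.q2]; norm_num)]
    simp
  | cons x t ih =>
    have hx := hl x List.mem_cons_self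
    have ht := ih fun y hy => hl y (List.mem_cons_of_mem x hy)
    simp only [List.prod_cons, Subgroup.coe_mul, Equiv.Perm.mul_apply, List.length_cons]
    have halc := S.alc_list t fun y hy => hl y (List.mem_cons_of_mem x hy)
    have := S.nv_simple_le hx halc
    omega

lemma nv_le_len (w : AffWeyl a1 a2) : Nv a1 a2 (act w q) ≤ len a1 a2 w := by
  obtain ⟨l, hl, hlen, hp⟩ := S.len_spec w
  have := S.nv_le_word l hl
  rw [hp] at this
  rwa [hlen] at this

end Setup

end Aux4
section Aux5

/-- The six linear parts (in root coordinates) of elements of the Weyl group of `A₂`. -/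
def M6 (p q r s : ℤ) : Prop :=
  p=1 ∧ q=0 ∧ r=0 ∧ s=1 ∨ p=-1 ∧ q=-1 ∧ r=1 ∧ s=0 ∨ p=0 ∧ q=1 ∧ r=-1 ∧ s=-1 ∨
  p=-1 ∧ q=0 ∧ r=1 ∧ s=1 ∨ p=1 ∧ q=1 ∧ r=0 ∧ s=-1 ∨ p=0 ∧ q=-1 ∧ r=-1 ∧ s=0

/-- Affine form, in root coordinates, of elements of the affine Weyl group. -/
def AffForm (a1 a2 : V) (g : Equiv.Perm V) : Prop :=
  ∃ p q r s b1 b2 : ℤ, M6 p q r s ∧ (b1 - b2) % 3 = 0 ∧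
    ∀ v : V, ⟪a1, g v⟫ = (p:ℝ) * ⟪a1, v⟫ + (q:ℝ) * ⟪a2, v⟫ + (b1:ℝ) ∧
             ⟪a2, g v⟫ = (r:ℝ) * ⟪a1, v⟫ + (s:ℝ) * ⟪a2, v⟫ + (b2:ℝ)

lemma affForm_one (a1 a2 : V) : AffForm a1 a2 1 :=
  ⟨1, 0, 0, 1, 0, 0, Or.inl ⟨rfl, rfl, rfl, rfl⟩, by norm_num,
    fun v => by simp [Equiv.Perm.one_apply]⟩

lemma affForm_mul {a1 a2 : V} {g h : Equiv.Perm V}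
    (hg : AffForm a1 a2 g) (hh : AffForm a1 a2 h) : AffForm a1 a2 (g * h) := by
  obtain ⟨p1, q1, r1, s1, b1, c1, hM1, hd1, he1⟩ := hg
  obtain ⟨p2, q2, r2, s2, b2, c2, hM2, hd2, he2⟩ := hh
  refine ⟨p1*p2+q1*r2, p1*q2+q1*s2, r1*p2+s1*r2, r1*q2+s1*s2,
    p1*b2+q1*c2+b1, r1*b2+s1*c2+c1, ?_, ?_, ?_⟩
  · clear he1 he2 hd1 hd2
    unfold M6 at hM1 hM2 ⊢
    rcases hM1 with ⟨rfl,rfl,rfl,rfl⟩|⟨rfl,rfl,rfl,rfl⟩|⟨rfl,rfl,rfl,rfl⟩|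
      ⟨rfl,rfl,rfl,rfl⟩|⟨rfl,rfl,rfl,rfl⟩|⟨rfl,rfl,rfl,rfl⟩ <;>
    rcases hM2 with ⟨rfl,rfl,rfl,rfl⟩|⟨rfl,rfl,rfl,rfl⟩|⟨rfl,rfl,rfl,rfl⟩|
      ⟨rfl,rfl,rfl,rfl⟩|⟨rfl,rfl,rfl,rfl⟩|⟨rfl,rfl,rfl,rfl⟩ <;> norm_num
  · clear he1 he2 hM2
    unfold M6 at hM1
    rcases hM1 with ⟨rfl,rfl,rfl,rfl⟩|⟨rfl,rfl,rfl,rfl⟩|⟨rfl,rfl,rfl,rfl⟩|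
      ⟨rfl,rfl,rfl,rfl⟩|⟨rfl,rfl,rfl,rfl⟩|⟨rfl,rfl,rfl,rfl⟩ <;> omega
  · intro v
    have h1 := he1 (h v)
    have h2 := he2 v
    constructor
    · rw [Equiv.Perm.mul_apply, h1.1, h2.1, h2.2]; push_cast; ring
    · rw [Equiv.Perm.mul_apply, h1.2, h2.1, h2.2]; push_cast; ring

lemma affForm_inv {a1 a2 : V} {g : Equiv.Perm V} (hg : AffForm a1 a2 g) :
    AffForm a1 a2 g⁻¹ := by
  obtain ⟨p, q, r, s, b1, b2, hM, hd, he⟩ := hg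
  unfold M6 at hM
  have key : ∀ v : V, ⟪a1, g (g⁻¹ v)⟫ = (p:ℝ) * ⟪a1, g⁻¹ v⟫ + (q:ℝ) * ⟪a2, g⁻¹ v⟫ + (b1:ℝ) ∧
      ⟪a2, g (g⁻¹ v)⟫ = (r:ℝ) * ⟪a1, g⁻¹ v⟫ + (s:ℝ) * ⟪a2, g⁻¹ v⟫ + (b2:ℝ) :=
    fun v => he (g⁻¹ v)
  simp only [show ∀ v, g (g⁻¹ v) = v from fun v => Equiv.apply_symm_apply g v] at key
  rcases hM with ⟨rfl,rfl,rfl,rfl⟩|⟨rfl,rfl,rfl,rfl⟩|⟨rfl,rfl,rfl,rfl⟩|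
    ⟨rfl,rfl,rfl,rfl⟩|⟨rfl,rfl,rfl,rfl⟩|⟨rfl,rfl,rfl,rfl⟩
  · exact ⟨1, 0, 0, 1, -b1, -b2, Or.inl ⟨rfl,rfl,rfl,rfl⟩, by omega, fun v => by
      obtain ⟨k1, k2⟩ := key v
      constructor <;> push_cast at k1 k2 ⊢ <;> linarith⟩
  · exact ⟨0, 1, -1, -1, -b2, b1+b2, by norm_num [M6], by omega, fun v => by
      obtain ⟨k1, k2⟩ := key v
      constructor <;> push_cast at k1 k2 ⊢ <;> linarith⟩
  · exact ⟨-1, -1, 1, 0, b1+b2, -b1, by norm_num [M6], by omega, fun v => by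
      obtain ⟨k1, k2⟩ := key v
      constructor <;> push_cast at k1 k2 ⊢ <;> linarith⟩
  · exact ⟨-1, 0, 1, 1, b1, -b1-b2, by norm_num [M6], by omega, fun v => by
      obtain ⟨k1, k2⟩ := key v
      constructor <;> push_cast at k1 k2 ⊢ <;> linarith⟩
  · exact ⟨1, 1, 0, -1, -b1-b2, b2, by norm_num [M6], by omega, fun v => by
      obtain ⟨k1, k2⟩ := key v
      constructor <;> push_cast at k1 k2 ⊢ <;> linarith⟩
  · exact ⟨0, -1, -1, 0, b2, b1, by norm_num [M6], by omega, fun v => by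
      obtain ⟨k1, k2⟩ := key v
      constructor <;> push_cast at k1 k2 ⊢ <;> linarith⟩

namespace Setup

variable {a1 a2 q : V} (S : Setup a1 a2 q)

include S

lemma affForm_refl {g : Equiv.Perm V} (hg : IsAffRefl a1 a2 g) : AffForm a1 a2 g := by
  obtain ⟨α, hα, k, hk⟩ := hg
  have main : ∀ β : V, (β = a1 ∨ β = a2 ∨ β = a1 + a2) → ∀ j : ℤ,
      AffForm a1 a2 g → True := fun _ _ _ _ => trivial
  clear main
  have pos_case : ∀ (j : ℤ), ∀ β, (β = a1 ∨ β = a2 ∨ β = a1 + a2) →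
      (∀ v : V, g v = sRefl β j v) → AffForm a1 a2 g := by
    intro j β hβ hgv
    rcases hβ with rfl | rfl | rfl
    · exact ⟨-1, 0, 1, 1, 2*j, -j, by norm_num [M6], by omega, fun v => by
        rw [hgv v]
        exact ⟨by rw [S.X_s1]; push_cast; ring, by rw [S.Y_s1]; push_cast; ring⟩⟩
    · exact ⟨1, 1, 0, -1, -j, 2*j, by norm_num [M6], by omega, fun v => by
        rw [hgv v]
        exact ⟨by rw [S.X_s2]; push_cast; ring, by rw [S.Y_s2]; push_cast; ring⟩⟩
    · exact ⟨0, -1, -1, 0, j, j, by norm_num [M6], by omega, fun v => by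
        rw [hgv v]
        exact ⟨by rw [S.X_s3]; push_cast; ring, by rw [S.Y_s3]; push_cast; ring⟩⟩
  rcases hα with h | h
  · simp only [PosRoots, Set.mem_insert_iff, Set.mem_singleton_iff] at h
    exact pos_case k α h hk
  · simp only [PosRoots, Set.mem_insert_iff, Set.mem_singleton_iff] at h
    have hα' : α = -a1 ∨ α = -a2 ∨ α = -(a1 + a2) := by
      rcases h with h | h | h
      · left; rw [← h, neg_neg]
      · right; left; rw [← h, neg_neg]
      · right; right; rw [← h, neg_neg]
    rcases hα' with rfl | rfl | rfl
    · exact pos_case (-k) a1 (Or.inl rfl) fun v => by rw [hk v, sRefl_neg]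
    · exact pos_case (-k) a2 (Or.inr (Or.inl rfl)) fun v => by rw [hk v, sRefl_neg]
    · exact pos_case (-k) (a1+a2) (Or.inr (Or.inr rfl)) fun v => by rw [hk v, sRefl_neg]

lemma affForm_all {g : Equiv.Perm V} (hg : g ∈ AffWeyl a1 a2) : AffForm a1 a2 g := by
  induction hg using Subgroup.closure_induction with
  | mem x hx => exact S.affForm_refl hx
  | one => exact affForm_one a1 a2
  | mul x y hx hy ihx ihy => exact affForm_mul ihx ihy
  | inv x hx ihx => exact affForm_inv ihx

lemma eq_one_of_fix {w : AffWeyl a1 a2} (h1 : ⟪a1, act w q⟫ = 1/3)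
    (h2 : ⟪a2, act w q⟫ = 1/3) : w = 1 := by
  obtain ⟨p, q', r, s, b1, b2, hM, hd, he⟩ := S.affForm_all w.2
  have e1 := (he q).1
  have e2 := (he q).2
  rw [show ((w : Equiv.Perm V) q) = act w q from rfl, h1, S.q1, S.q2] at e1
  rw [show ((w : Equiv.Perm V) q) = act w q from rfl, h2, S.q1, S.q2] at e2
  have E1 : (p + q' + 3*b1 : ℤ) = 1 := by
    have : ((p + q' + 3*b1 : ℤ) : ℝ) = ((1:ℤ):ℝ) := by push_cast; linarith
    exact_mod_cast this
  have E2 : (r + s + 3*b2 : ℤ) = 1 := by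
    have : ((r + s + 3*b2 : ℤ) : ℝ) = ((1:ℤ):ℝ) := by push_cast; linarith
    exact_mod_cast this
  unfold M6 at hM
  rcases hM with ⟨rfl,rfl,rfl,rfl⟩|⟨rfl,rfl,rfl,rfl⟩|⟨rfl,rfl,rfl,rfl⟩|
    ⟨rfl,rfl,rfl,rfl⟩|⟨rfl,rfl,rfl,rfl⟩|⟨rfl,rfl,rfl,rfl⟩
  rotate_left
  · exact absurd hd (by omega)
  · exact absurd hd (by omega)
  · exact absurd E1 (by omega)
  · exact absurd E1 (by omega)
  · exact absurd E1 (by omega)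
  obtain rfl : b1 = 0 := by omega
  obtain rfl : b2 = 0 := by omega
  apply Subtype.ext
  apply Equiv.ext
  intro v
  simp only [OneMemClass.coe_one, Equiv.Perm.one_apply]
  have hv := he v
  refine S.pair_inj ?_ ?_
  · have := hv.1; push_cast at this; linarith
  · have := hv.2; push_cast at this; linarith

lemma len_le_nv : ∀ n : ℕ, ∀ w : AffWeyl a1 a2, Nv a1 a2 (act w q) = n →
    len a1 a2 w ≤ n := by
  intro n
  induction n using Nat.strong_induction_on with
  | _ n ih =>
    intro w hN
    rcases Nat.eq_zero_or_pos n with rfl | hpos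
    · -- w = 1
      obtain ⟨m, n', hmn⟩ := S.alc_act w
      have hw1 : w = 1 := by
        rcases hmn with ⟨hx, hy⟩ | ⟨hx, hy⟩
        · rw [Nv1 m n' hx hy] at hN
          obtain ⟨rfl, rfl⟩ : m = 0 ∧ n' = 0 := by omega
          exact S.eq_one_of_fix (by rw [hx]; norm_num) (by rw [hy]; norm_num)
        · rw [Nv2 m n' hx hy] at hN; omega
      rw [hw1]
      exact len_le_word (l := []) (by simp) (by simp)
    · obtain ⟨δ, k, hδk, hNv⟩ := S.descent (S.alc_act w) (by omega)
      have hδ2 : ⟪δ, δ⟫ = 2 := by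
        rcases hδk with ⟨rfl, _⟩ | ⟨rfl, _⟩ | ⟨rfl, _⟩
        · exact S.n1
        · exact S.n2
        · exact S.n3
      have hδφ : δ ∈ Phi a1 a2 := by
        rcases hδk with ⟨rfl, _⟩ | ⟨rfl, _⟩ | ⟨rfl, _⟩
        · exact S.phi1
        · exact S.phi2
        · exact S.phi3
      set s : AffWeyl a1 a2 := ⟨sPerm δ hδ2 k, Subgroup.subset_closure ⟨δ, hδφ, k, fun _ => rfl⟩⟩
        with hs_def
      have hsimple : IsSimpleRefl a1 a2 (s : Equiv.Perm V) := by
        rcases hδk with ⟨rfl, rfl⟩ | ⟨rfl, rfl⟩ | ⟨rfl, rfl⟩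
        · exact Or.inl fun _ => rfl
        · exact Or.inr (Or.inl fun _ => rfl)
        · exact Or.inr (Or.inr fun _ => rfl)
      have hsw : Nv a1 a2 (act (s * w) q) = n - 1 := by
        show Nv a1 a2 (((s * w : AffWeyl a1 a2) : Equiv.Perm V) q) = n - 1
        rw [Subgroup.coe_mul, Equiv.Perm.mul_apply]
        have : (s : Equiv.Perm V) ((w : Equiv.Perm V) q) = sRefl δ k (act w q) := rfl
        rw [this]
        omega
      have ihs := ih (n-1) (by omega) (s * w) hsw
      have hss : s * s = 1 := S.simple_sq hsimple
      obtain ⟨l, hls, hll, hlp⟩ := S.len_spec (s * w)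
      have hword : len a1 a2 w ≤ (s :: l).length := by
        apply len_le_word
        · intro g hg
          rcases List.mem_cons.mp hg with rfl | hg
          · exact hsimple
          · exact hls g hg
        · rw [List.prod_cons, hlp, ← mul_assoc, hss, one_mul]
      simp only [List.length_cons, hll] at hword
      omega

lemma len_eq (w : AffWeyl a1 a2) : len a1 a2 w = Nv a1 a2 (act w q) :=
  le_antisymm (S.len_le_nv _ w rfl) (S.nv_le_len w)

end Setup

end Aux5
section Geom

lemma cont_inner (a : V) : Continuous fun v : V => ⟪a, v⟫ :=
  Continuous.inner continuous_const continuous_id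

lemma inner_lin (a : V) : IsLinearMap ℝ fun v : V => ⟪a, v⟫ :=
  ⟨fun u w => inner_add_right a u w, fun c u => by
    rw [real_inner_smul_right]; simp [smul_eq_mul]⟩

lemma inner_lin2 (a b : V) : IsLinearMap ℝ fun v : V => ⟪a, v⟫ + ⟪b, v⟫ :=
  ⟨fun u w => by rw [inner_add_right, inner_add_right]; ring, fun c u => by
    rw [real_inner_smul_right, real_inner_smul_right]; simp [smul_eq_mul]; ring⟩

lemma cont_inner2 (a b : V) : Continuous fun v : V => ⟪a, v⟫ + ⟪b, v⟫ :=
  (cont_inner a).add (cont_inner b)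

lemma mem_closure_dir {s : Set V} (v w : V)
    (h : ∀ n : ℕ, v + ((1:ℝ)/(n+1)) • w ∈ s) : v ∈ closure s := by
  have h0 : Filter.Tendsto (fun n : ℕ => (1:ℝ)/(n+1)) Filter.atTop (nhds 0) :=
    tendsto_one_div_add_atTop_nhds_zero_nat
  have ht : Filter.Tendsto (fun n : ℕ => v + ((1:ℝ)/(n+1)) • w) Filter.atTop (nhds v) := by
    have := (h0.smul_const w).const_add v
    simpa using this
  exact mem_closure_of_tendsto ht (Filter.Eventually.of_forall h)

lemma closure_ge {c : ℝ} {a : V} {s : Set V} (h : ∀ v ∈ s, c ≤ ⟪a, v⟫) :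
    ∀ v ∈ closure s, c ≤ ⟪a, v⟫ :=
  fun _ hv => closure_minimal h (isClosed_le continuous_const (cont_inner a)) hv

lemma closure_le {c : ℝ} {a : V} {s : Set V} (h : ∀ v ∈ s, ⟪a, v⟫ ≤ c) :
    ∀ v ∈ closure s, ⟪a, v⟫ ≤ c :=
  fun _ hv => closure_minimal h (isClosed_le (cont_inner a) continuous_const) hv

lemma closure_ge2 {c : ℝ} {a b : V} {s : Set V} (h : ∀ v ∈ s, c ≤ ⟪a, v⟫ + ⟪b, v⟫) :
    ∀ v ∈ closure s, c ≤ ⟪a, v⟫ + ⟪b, v⟫ :=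
  fun _ hv => closure_minimal h (isClosed_le continuous_const (cont_inner2 a b)) hv

lemma closure_le2 {c : ℝ} {a b : V} {s : Set V} (h : ∀ v ∈ s, ⟪a, v⟫ + ⟪b, v⟫ ≤ c) :
    ∀ v ∈ closure s, ⟪a, v⟫ + ⟪b, v⟫ ≤ c :=
  fun _ hv => closure_minimal h (isClosed_le (cont_inner2 a b) continuous_const) hv

/-- The six chambers, explicitly. -/
def D1 (a1 a2 : V) : Set V := {v | 1 < ⟪a1, v⟫ ∧ 1 < ⟪a2, v⟫}
def D2 (a1 a2 : V) : Set V := {v | ⟪a2, v⟫ < 0 ∧ 1 < ⟪a1, v⟫ + ⟪a2, v⟫}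
def D3 (a1 a2 : V) : Set V := {v | 1 < ⟪a1, v⟫ ∧ ⟪a1, v⟫ + ⟪a2, v⟫ < 0}
def D4 (a1 a2 : V) : Set V := {v | ⟪a1, v⟫ < 0 ∧ ⟪a2, v⟫ < 0}
def D5 (a1 a2 : V) : Set V := {v | 1 < ⟪a2, v⟫ ∧ ⟪a1, v⟫ + ⟪a2, v⟫ < 0}
def D6 (a1 a2 : V) : Set V := {v | ⟪a1, v⟫ < 0 ∧ 1 < ⟪a1, v⟫ + ⟪a2, v⟫}

lemma isOpen_D1 (a1 a2 : V) : IsOpen (D1 a1 a2) :=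
  IsOpen.inter (isOpen_lt continuous_const (cont_inner a1))
    (isOpen_lt continuous_const (cont_inner a2))
lemma isOpen_D2 (a1 a2 : V) : IsOpen (D2 a1 a2) :=
  IsOpen.inter (isOpen_lt (cont_inner a2) continuous_const)
    (isOpen_lt continuous_const (cont_inner2 a1 a2))
lemma isOpen_D3 (a1 a2 : V) : IsOpen (D3 a1 a2) :=
  IsOpen.inter (isOpen_lt continuous_const (cont_inner a1))
    (isOpen_lt (cont_inner2 a1 a2) continuous_const)
lemma isOpen_D4 (a1 a2 : V) : IsOpen (D4 a1 a2) :=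
  IsOpen.inter (isOpen_lt (cont_inner a1) continuous_const)
    (isOpen_lt (cont_inner a2) continuous_const)
lemma isOpen_D5 (a1 a2 : V) : IsOpen (D5 a1 a2) :=
  IsOpen.inter (isOpen_lt continuous_const (cont_inner a2))
    (isOpen_lt (cont_inner2 a1 a2) continuous_const)
lemma isOpen_D6 (a1 a2 : V) : IsOpen (D6 a1 a2) :=
  IsOpen.inter (isOpen_lt (cont_inner a1) continuous_const)
    (isOpen_lt continuous_const (cont_inner2 a1 a2))

lemma convex_D1 (a1 a2 : V) : Convex ℝ (D1 a1 a2) :=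
  Convex.inter (convex_halfSpace_gt (inner_lin a1) 1) (convex_halfSpace_gt (inner_lin a2) 1)
lemma convex_D2 (a1 a2 : V) : Convex ℝ (D2 a1 a2) :=
  Convex.inter (convex_halfSpace_lt (inner_lin a2) 0) (convex_halfSpace_gt (inner_lin2 a1 a2) 1)
lemma convex_D3 (a1 a2 : V) : Convex ℝ (D3 a1 a2) :=
  Convex.inter (convex_halfSpace_gt (inner_lin a1) 1) (convex_halfSpace_lt (inner_lin2 a1 a2) 0)
lemma convex_D4 (a1 a2 : V) : Convex ℝ (D4 a1 a2) :=
  Convex.inter (convex_halfSpace_lt (inner_lin a1) 0) (convex_halfSpace_lt (inner_lin a2) 0)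
lemma convex_D5 (a1 a2 : V) : Convex ℝ (D5 a1 a2) :=
  Convex.inter (convex_halfSpace_gt (inner_lin a2) 1) (convex_halfSpace_lt (inner_lin2 a1 a2) 0)
lemma convex_D6 (a1 a2 : V) : Convex ℝ (D6 a1 a2) :=
  Convex.inter (convex_halfSpace_lt (inner_lin a1) 0) (convex_halfSpace_gt (inner_lin2 a1 a2) 1)

lemma compl_strip {a1 a2 : V} {v : V} (hv : v ∈ (StripUnion a1 a2)ᶜ) :
    (⟪a1, v⟫ < 0 ∨ 1 < ⟪a1, v⟫) ∧ (⟪a2, v⟫ < 0 ∨ 1 < ⟪a2, v⟫) ∧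
      (⟪a1, v⟫ + ⟪a2, v⟫ < 0 ∨ 1 < ⟪a1, v⟫ + ⟪a2, v⟫) := by
  simp only [StripUnion, Strip, Set.mem_compl_iff, Set.mem_union, Set.mem_setOf_eq,
    inner_add_left, not_or, not_and, not_le] at hv
  obtain ⟨⟨h1, h2⟩, h3⟩ := hv
  refine ⟨?_, ?_, ?_⟩
  · rcases le_or_gt 0 ⟪a1, v⟫ with h | h
    · exact Or.inr (h1 h)
    · exact Or.inl h
  · rcases le_or_gt 0 ⟪a2, v⟫ with h | h
    · exact Or.inr (h2 h)
    · exact Or.inl h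
  · rcases le_or_gt 0 (⟪a1, v⟫ + ⟪a2, v⟫) with h | h
    · exact Or.inr (h3 h)
    · exact Or.inl h

lemma mem_compl_of {a1 a2 : V} {v : V} (h1 : ⟪a1, v⟫ < 0 ∨ 1 < ⟪a1, v⟫)
    (h2 : ⟪a2, v⟫ < 0 ∨ 1 < ⟪a2, v⟫) (h3 : ⟪a1, v⟫ + ⟪a2, v⟫ < 0 ∨ 1 < ⟪a1, v⟫ + ⟪a2, v⟫) :
    v ∈ (StripUnion a1 a2)ᶜ := by
  simp only [StripUnion, Strip, Set.mem_compl_iff, Set.mem_union, Set.mem_setOf_eq,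
    inner_add_left, not_or, not_and, not_le]
  refine ⟨⟨fun h => ?_, fun h => ?_⟩, fun h => ?_⟩
  · rcases h1 with h' | h'; · linarith
    exact h'
  · rcases h2 with h' | h'; · linarith
    exact h'
  · rcases h3 with h' | h'; · linarith
    exact h'

lemma exhaust {a1 a2 : V} {v : V} (hv : v ∈ (StripUnion a1 a2)ᶜ) :
    v ∈ D1 a1 a2 ∨ v ∈ D2 a1 a2 ∨ v ∈ D3 a1 a2 ∨ v ∈ D4 a1 a2 ∨ v ∈ D5 a1 a2 ∨
      v ∈ D6 a1 a2 := by
  obtain ⟨h1, h2, h3⟩ := compl_strip hv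
  simp only [D1, D2, D3, D4, D5, D6, Set.mem_setOf_eq]
  rcases h1 with h1 | h1 <;> rcases h2 with h2 | h2 <;> rcases h3 with h3 | h3 <;>
    first
      | (exfalso; linarith)
      | tauto

lemma chamber_eq_of {a1 a2 : V} {C : Set V} (hC : IsChamber a1 a2 C) {v : V} (hvC : v ∈ C)
    {D U : Set V} (hDo : IsOpen D) (hDc : Convex ℝ D) (hUo : IsOpen U)
    (hdisj : Disjoint D U) (hcover : (StripUnion a1 a2)ᶜ ⊆ D ∪ U)
    (hDsub : D ⊆ (StripUnion a1 a2)ᶜ) (hvD : v ∈ D) : C = D := by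
  obtain ⟨v0, hv0, rfl⟩ := hC
  rw [connectedComponentIn_eq hvC]
  apply Set.Subset.antisymm
  · exact IsPreconnected.subset_left_of_subset_union hDo hUo hdisj
      ((connectedComponentIn_subset _ _).trans hcover)
      ⟨v, mem_connectedComponentIn (hDsub hvD), hvD⟩
      isPreconnected_connectedComponentIn
  · exact (hDc.isPreconnected).subset_connectedComponentIn hvD hDsub

end Geom
section Geom2

lemma chamber_eq_D1 {a1 a2 : V} {C : Set V} (hC : IsChamber a1 a2 C) {v : V}
    (hvC : v ∈ C) (hvD : v ∈ D1 a1 a2) : C = D1 a1 a2 := by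
  refine chamber_eq_of hC hvC (isOpen_D1 a1 a2) (convex_D1 a1 a2)
    (U := D2 a1 a2 ∪ (D3 a1 a2 ∪ (D4 a1 a2 ∪ (D5 a1 a2 ∪ D6 a1 a2))))
    ((isOpen_D2 a1 a2).union ((isOpen_D3 a1 a2).union ((isOpen_D4 a1 a2).union
      ((isOpen_D5 a1 a2).union (isOpen_D6 a1 a2))))) ?_ ?_ ?_ hvD
  · rw [Set.disjoint_left]
    rintro w hw (h | h | h | h | h) <;> obtain ⟨hw1, hw2⟩ := hw <;>
      obtain ⟨ha, hb⟩ := h <;> linarith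
  · intro w hw
    rcases exhaust hw with h | h | h | h | h | h <;> simp only [Set.mem_union] <;> tauto
  · intro w hw
    obtain ⟨hw1, hw2⟩ := hw
    exact mem_compl_of (Or.inr hw1) (Or.inr hw2) (Or.inr (by linarith))

lemma chamber_eq_D2 {a1 a2 : V} {C : Set V} (hC : IsChamber a1 a2 C) {v : V}
    (hvC : v ∈ C) (hvD : v ∈ D2 a1 a2) : C = D2 a1 a2 := by
  refine chamber_eq_of hC hvC (isOpen_D2 a1 a2) (convex_D2 a1 a2)
    (U := D1 a1 a2 ∪ (D3 a1 a2 ∪ (D4 a1 a2 ∪ (D5 a1 a2 ∪ D6 a1 a2))))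
    ((isOpen_D1 a1 a2).union ((isOpen_D3 a1 a2).union ((isOpen_D4 a1 a2).union
      ((isOpen_D5 a1 a2).union (isOpen_D6 a1 a2))))) ?_ ?_ ?_ hvD
  · rw [Set.disjoint_left]
    rintro w hw (h | h | h | h | h) <;> obtain ⟨hw1, hw2⟩ := hw <;>
      obtain ⟨ha, hb⟩ := h <;> linarith
  · intro w hw
    rcases exhaust hw with h | h | h | h | h | h <;> simp only [Set.mem_union] <;> tauto
  · intro w hw
    obtain ⟨hw1, hw2⟩ := hw
    exact mem_compl_of (Or.inr (by linarith)) (Or.inl hw1) (Or.inr hw2)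

lemma chamber_eq_D3 {a1 a2 : V} {C : Set V} (hC : IsChamber a1 a2 C) {v : V}
    (hvC : v ∈ C) (hvD : v ∈ D3 a1 a2) : C = D3 a1 a2 := by
  refine chamber_eq_of hC hvC (isOpen_D3 a1 a2) (convex_D3 a1 a2)
    (U := D1 a1 a2 ∪ (D2 a1 a2 ∪ (D4 a1 a2 ∪ (D5 a1 a2 ∪ D6 a1 a2))))
    ((isOpen_D1 a1 a2).union ((isOpen_D2 a1 a2).union ((isOpen_D4 a1 a2).union
      ((isOpen_D5 a1 a2).union (isOpen_D6 a1 a2))))) ?_ ?_ ?_ hvD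
  · rw [Set.disjoint_left]
    rintro w hw (h | h | h | h | h) <;> obtain ⟨hw1, hw2⟩ := hw <;>
      obtain ⟨ha, hb⟩ := h <;> linarith
  · intro w hw
    rcases exhaust hw with h | h | h | h | h | h <;> simp only [Set.mem_union] <;> tauto
  · intro w hw
    obtain ⟨hw1, hw2⟩ := hw
    exact mem_compl_of (Or.inr hw1) (Or.inl (by linarith)) (Or.inl hw2)

lemma chamber_eq_D4 {a1 a2 : V} {C : Set V} (hC : IsChamber a1 a2 C) {v : V}
    (hvC : v ∈ C) (hvD : v ∈ D4 a1 a2) : C = D4 a1 a2 := by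
  refine chamber_eq_of hC hvC (isOpen_D4 a1 a2) (convex_D4 a1 a2)
    (U := D1 a1 a2 ∪ (D2 a1 a2 ∪ (D3 a1 a2 ∪ (D5 a1 a2 ∪ D6 a1 a2))))
    ((isOpen_D1 a1 a2).union ((isOpen_D2 a1 a2).union ((isOpen_D3 a1 a2).union
      ((isOpen_D5 a1 a2).union (isOpen_D6 a1 a2))))) ?_ ?_ ?_ hvD
  · rw [Set.disjoint_left]
    rintro w hw (h | h | h | h | h) <;> obtain ⟨hw1, hw2⟩ := hw <;>
      obtain ⟨ha, hb⟩ := h <;> linarith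
  · intro w hw
    rcases exhaust hw with h | h | h | h | h | h <;> simp only [Set.mem_union] <;> tauto
  · intro w hw
    obtain ⟨hw1, hw2⟩ := hw
    exact mem_compl_of (Or.inl hw1) (Or.inl hw2) (Or.inl (by linarith))

lemma chamber_eq_D5 {a1 a2 : V} {C : Set V} (hC : IsChamber a1 a2 C) {v : V}
    (hvC : v ∈ C) (hvD : v ∈ D5 a1 a2) : C = D5 a1 a2 := by
  refine chamber_eq_of hC hvC (isOpen_D5 a1 a2) (convex_D5 a1 a2)
    (U := D1 a1 a2 ∪ (D2 a1 a2 ∪ (D3 a1 a2 ∪ (D4 a1 a2 ∪ D6 a1 a2))))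
    ((isOpen_D1 a1 a2).union ((isOpen_D2 a1 a2).union ((isOpen_D3 a1 a2).union
      ((isOpen_D4 a1 a2).union (isOpen_D6 a1 a2))))) ?_ ?_ ?_ hvD
  · rw [Set.disjoint_left]
    rintro w hw (h | h | h | h | h) <;> obtain ⟨hw1, hw2⟩ := hw <;>
      obtain ⟨ha, hb⟩ := h <;> linarith
  · intro w hw
    rcases exhaust hw with h | h | h | h | h | h <;> simp only [Set.mem_union] <;> tauto
  · intro w hw
    obtain ⟨hw1, hw2⟩ := hw
    exact mem_compl_of (Or.inl (by linarith)) (Or.inr hw1) (Or.inl hw2)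

lemma chamber_eq_D6 {a1 a2 : V} {C : Set V} (hC : IsChamber a1 a2 C) {v : V}
    (hvC : v ∈ C) (hvD : v ∈ D6 a1 a2) : C = D6 a1 a2 := by
  refine chamber_eq_of hC hvC (isOpen_D6 a1 a2) (convex_D6 a1 a2)
    (U := D1 a1 a2 ∪ (D2 a1 a2 ∪ (D3 a1 a2 ∪ (D4 a1 a2 ∪ D5 a1 a2))))
    ((isOpen_D1 a1 a2).union ((isOpen_D2 a1 a2).union ((isOpen_D3 a1 a2).union
      ((isOpen_D4 a1 a2).union (isOpen_D5 a1 a2))))) ?_ ?_ ?_ hvD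
  · rw [Set.disjoint_left]
    rintro w hw (h | h | h | h | h) <;> obtain ⟨hw1, hw2⟩ := hw <;>
      obtain ⟨ha, hb⟩ := h <;> linarith
  · intro w hw
    rcases exhaust hw with h | h | h | h | h | h <;> simp only [Set.mem_union] <;> tauto
  · intro w hw
    obtain ⟨hw1, hw2⟩ := hw
    exact mem_compl_of (Or.inl hw1) (Or.inr (by linarith)) (Or.inr hw2)

lemma clA0_bounds {a1 a2 : V} {v : V} (hv : v ∈ closure (A0 a1 a2)) :
    0 ≤ ⟪a1, v⟫ ∧ 0 ≤ ⟪a2, v⟫ ∧ ⟪a1, v⟫ + ⟪a2, v⟫ ≤ 1 := by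
  have hsub : A0 a1 a2 ⊆ {w | 0 ≤ ⟪a1, w⟫} ∩ ({w | 0 ≤ ⟪a2, w⟫} ∩
      {w | ⟪a1, w⟫ + ⟪a2, w⟫ ≤ 1}) := by
    intro w hw
    obtain ⟨hw1, hw2, hw3⟩ := hw
    rw [inner_add_left] at hw3
    exact ⟨le_of_lt hw1, le_of_lt hw2, le_of_lt hw3⟩
  have hcl : IsClosed ({w : V | 0 ≤ ⟪a1, w⟫} ∩ ({w | 0 ≤ ⟪a2, w⟫} ∩
      {w | ⟪a1, w⟫ + ⟪a2, w⟫ ≤ 1})) :=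
    (isClosed_le continuous_const (cont_inner a1)).inter
      ((isClosed_le continuous_const (cont_inner a2)).inter
        (isClosed_le (cont_inner2 a1 a2) continuous_const))
  exact closure_minimal hsub hcl hv

/-- The vertex `(1,0)` (in root coordinates) of the fundamental alcove. -/
def pA (a1 a2 : V) : V := (2/3 : ℝ) • a1 + (1/3 : ℝ) • a2
/-- The vertex `(0,1)` (in root coordinates) of the fundamental alcove. -/
def pB (a1 a2 : V) : V := (1/3 : ℝ) • a1 + (2/3 : ℝ) • a2

namespace Setup

variable {a1 a2 q : V} (S : Setup a1 a2 q)

include S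

lemma XpA : ⟪a1, pA a1 a2⟫ = 1 := by
  simp only [pA, inner_add_right, real_inner_smul_right, S.n1, S.h12]; ring
lemma YpA : ⟪a2, pA a1 a2⟫ = 0 := by
  simp only [pA, inner_add_right, real_inner_smul_right, S.n2, S.h21]; ring
lemma XpB : ⟪a1, pB a1 a2⟫ = 0 := by
  simp only [pB, inner_add_right, real_inner_smul_right, S.n1, S.h12]; ring
lemma YpB : ⟪a2, pB a1 a2⟫ = 1 := by
  simp only [pB, inner_add_right, real_inner_smul_right, S.n2, S.h21]; ring

lemma mem_clA0 {v : V} (h1 : 0 ≤ ⟪a1, v⟫) (h2 : 0 ≤ ⟪a2, v⟫)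
    (h3 : ⟪a1, v⟫ + ⟪a2, v⟫ ≤ 1) : v ∈ closure (A0 a1 a2) := by
  apply mem_closure_dir v (q - v)
  intro n
  have hs0 : (0:ℝ) < 1/(n+1) := by positivity
  have hs1 : (1:ℝ)/(n+1) ≤ 1 := by
    rw [div_le_one (by positivity)]
    have : (0:ℝ) ≤ n := Nat.cast_nonneg n
    linarith
  have e1 : ⟪a1, v + ((1:ℝ)/(n+1)) • (q - v)⟫
      = ⟪a1, v⟫ + (1/(n+1)) * (1/3 - ⟪a1, v⟫) := by
    rw [inner_add_right, real_inner_smul_right, inner_sub_right, S.q1]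
  have e2 : ⟪a2, v + ((1:ℝ)/(n+1)) • (q - v)⟫
      = ⟪a2, v⟫ + (1/(n+1)) * (1/3 - ⟪a2, v⟫) := by
    rw [inner_add_right, real_inner_smul_right, inner_sub_right, S.q2]
  refine ⟨?_, ?_, ?_⟩
  · rw [e1]
    nlinarith [mul_nonneg (by linarith : (0:ℝ) ≤ 1 - 1/(n+1)) h1]
  · rw [e2]
    nlinarith [mul_nonneg (by linarith : (0:ℝ) ≤ 1 - 1/(n+1)) h2]
  · rw [inner_add_left, e1, e2]
    nlinarith [mul_nonneg (by linarith : (0:ℝ) ≤ 1 - 1/(n+1)) (by linarith :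
      (0:ℝ) ≤ 1 - (⟪a1, v⟫ + ⟪a2, v⟫))]

lemma sing_a1 : Hplane a1 1 ∩ closure (A0 a1 a2) = {pA a1 a2} := by
  ext v
  simp only [Set.mem_inter_iff, Set.mem_singleton_iff, Hplane, Set.mem_setOf_eq]
  constructor
  · rintro ⟨hH, hA⟩
    obtain ⟨h1, h2, h3⟩ := clA0_bounds hA
    push_cast at hH
    have hy : ⟪a2, v⟫ = 0 := by linarith
    exact S.pair_inj (by rw [hH, S.XpA]) (by rw [hy, S.YpA])
  · rintro rfl
    exact ⟨by rw [S.XpA]; norm_num, S.mem_clA0 (by rw [S.XpA]; norm_num)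
      (by rw [S.YpA]) (by rw [S.XpA, S.YpA]; norm_num)⟩

lemma sing_a2 : Hplane a2 1 ∩ closure (A0 a1 a2) = {pB a1 a2} := by
  ext v
  simp only [Set.mem_inter_iff, Set.mem_singleton_iff, Hplane, Set.mem_setOf_eq]
  constructor
  · rintro ⟨hH, hA⟩
    obtain ⟨h1, h2, h3⟩ := clA0_bounds hA
    push_cast at hH
    have hx : ⟪a1, v⟫ = 0 := by linarith
    exact S.pair_inj (by rw [hx, S.XpB]) (by rw [hH, S.YpB])
  · rintro rfl
    exact ⟨by rw [S.YpB]; norm_num, S.mem_clA0 (by rw [S.XpB])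
      (by rw [S.YpB]; norm_num) (by rw [S.XpB, S.YpB]; norm_num)⟩

lemma sing_a3 : Hplane (a1+a2) 0 ∩ closure (A0 a1 a2) = {(0:V)} := by
  ext v
  simp only [Set.mem_inter_iff, Set.mem_singleton_iff, Hplane, Set.mem_setOf_eq]
  constructor
  · rintro ⟨hH, hA⟩
    obtain ⟨h1, h2, h3⟩ := clA0_bounds hA
    rw [inner_add_left] at hH
    push_cast at hH
    refine S.pair_inj ?_ ?_ <;> rw [inner_zero_right] <;> linarith
  · rintro rfl
    refine ⟨by rw [inner_add_left, inner_zero_right, inner_zero_right]; norm_num,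
      S.mem_clA0 (by rw [inner_zero_right]) (by rw [inner_zero_right])
        (by rw [inner_zero_right, inner_zero_right]; norm_num)⟩

lemma not_sing_a1 (p : V) (h : Hplane a1 0 ∩ closure (A0 a1 a2) = {p}) : False := by
  have h0 : (0:V) ∈ Hplane a1 0 ∩ closure (A0 a1 a2) :=
    ⟨by simp only [Hplane, Set.mem_setOf_eq, inner_zero_right]; norm_num,
      S.mem_clA0 (by rw [inner_zero_right]) (by rw [inner_zero_right])
        (by rw [inner_zero_right, inner_zero_right]; norm_num)⟩
  have hB : pB a1 a2 ∈ Hplane a1 0 ∩ closure (A0 a1 a2) :=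
    ⟨by simp only [Hplane, Set.mem_setOf_eq, S.XpB]; norm_num,
      S.mem_clA0 (by rw [S.XpB]) (by rw [S.YpB]; norm_num) (by rw [S.XpB, S.YpB]; norm_num)⟩
  rw [h, Set.mem_singleton_iff] at h0 hB
  have heq : (0:V) = pB a1 a2 := h0.trans hB.symm
  have := congrArg (fun w => ⟪a2, w⟫) heq
  simp only [inner_zero_right, S.YpB] at this
  norm_num at this

lemma not_sing_a2 (p : V) (h : Hplane a2 0 ∩ closure (A0 a1 a2) = {p}) : False := by
  have h0 : (0:V) ∈ Hplane a2 0 ∩ closure (A0 a1 a2) :=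
    ⟨by simp only [Hplane, Set.mem_setOf_eq, inner_zero_right]; norm_num,
      S.mem_clA0 (by rw [inner_zero_right]) (by rw [inner_zero_right])
        (by rw [inner_zero_right, inner_zero_right]; norm_num)⟩
  have hB : pA a1 a2 ∈ Hplane a2 0 ∩ closure (A0 a1 a2) :=
    ⟨by simp only [Hplane, Set.mem_setOf_eq, S.YpA]; norm_num,
      S.mem_clA0 (by rw [S.XpA]; norm_num) (by rw [S.YpA]) (by rw [S.XpA, S.YpA]; norm_num)⟩
  rw [h, Set.mem_singleton_iff] at h0 hB
  have heq : (0:V) = pA a1 a2 := h0.trans hB.symm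
  have := congrArg (fun w => ⟪a1, w⟫) heq
  simp only [inner_zero_right, S.XpA] at this
  norm_num at this

lemma not_sing_a3 (p : V) (h : Hplane (a1+a2) 1 ∩ closure (A0 a1 a2) = {p}) : False := by
  have h0 : pA a1 a2 ∈ Hplane (a1+a2) 1 ∩ closure (A0 a1 a2) :=
    ⟨by simp only [Hplane, Set.mem_setOf_eq, inner_add_left, S.XpA, S.YpA]; norm_num,
      S.mem_clA0 (by rw [S.XpA]; norm_num) (by rw [S.YpA]) (by rw [S.XpA, S.YpA]; norm_num)⟩
  have hB : pB a1 a2 ∈ Hplane (a1+a2) 1 ∩ closure (A0 a1 a2) :=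
    ⟨by simp only [Hplane, Set.mem_setOf_eq, inner_add_left, S.XpB, S.YpB]; norm_num,
      S.mem_clA0 (by rw [S.XpB]) (by rw [S.YpB]; norm_num) (by rw [S.XpB, S.YpB]; norm_num)⟩
  rw [h, Set.mem_singleton_iff] at h0 hB
  have heq : pA a1 a2 = pB a1 a2 := h0.trans hB.symm
  have := congrArg (fun w => ⟪a1, w⟫) heq
  simp only [S.XpA, S.XpB] at this
  norm_num at this

end Setup

end Geom2
section Geom3

lemma frontier_D2 {a1 a2 : V} {v : V} (hv : v ∈ frontier (D2 a1 a2)) :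
    ⟪a2, v⟫ ≤ 0 ∧ 1 ≤ ⟪a1, v⟫ + ⟪a2, v⟫ ∧ (⟪a2, v⟫ = 0 ∨ ⟪a1, v⟫ + ⟪a2, v⟫ = 1) := by
  rw [(isOpen_D2 a1 a2).frontier_eq] at hv
  obtain ⟨hcl, hnot⟩ := hv
  have hb1 : ⟪a2, v⟫ ≤ 0 := closure_le (fun w hw => le_of_lt hw.1) v hcl
  have hb2 : 1 ≤ ⟪a1, v⟫ + ⟪a2, v⟫ := closure_ge2 (fun w hw => le_of_lt hw.2) v hcl
  refine ⟨hb1, hb2, ?_⟩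
  by_contra hcon
  push_neg at hcon
  exact hnot ⟨lt_of_le_of_ne hb1 hcon.1, lt_of_le_of_ne hb2 (Ne.symm hcon.2)⟩

lemma frontier_D6 {a1 a2 : V} {v : V} (hv : v ∈ frontier (D6 a1 a2)) :
    ⟪a1, v⟫ ≤ 0 ∧ 1 ≤ ⟪a1, v⟫ + ⟪a2, v⟫ ∧ (⟪a1, v⟫ = 0 ∨ ⟪a1, v⟫ + ⟪a2, v⟫ = 1) := by
  rw [(isOpen_D6 a1 a2).frontier_eq] at hv
  obtain ⟨hcl, hnot⟩ := hv
  have hb1 : ⟪a1, v⟫ ≤ 0 := closure_le (fun w hw => le_of_lt hw.1) v hcl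
  have hb2 : 1 ≤ ⟪a1, v⟫ + ⟪a2, v⟫ := closure_ge2 (fun w hw => le_of_lt hw.2) v hcl
  refine ⟨hb1, hb2, ?_⟩
  by_contra hcon
  push_neg at hcon
  exact hnot ⟨lt_of_le_of_ne hb1 hcon.1, lt_of_le_of_ne hb2 (Ne.symm hcon.2)⟩

lemma frontier_D4 {a1 a2 : V} {v : V} (hv : v ∈ frontier (D4 a1 a2)) :
    ⟪a1, v⟫ ≤ 0 ∧ ⟪a2, v⟫ ≤ 0 ∧ (⟪a1, v⟫ = 0 ∨ ⟪a2, v⟫ = 0) := by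
  rw [(isOpen_D4 a1 a2).frontier_eq] at hv
  obtain ⟨hcl, hnot⟩ := hv
  have hb1 : ⟪a1, v⟫ ≤ 0 := closure_le (fun w hw => le_of_lt hw.1) v hcl
  have hb2 : ⟪a2, v⟫ ≤ 0 := closure_le (fun w hw => le_of_lt hw.2) v hcl
  refine ⟨hb1, hb2, ?_⟩
  by_contra hcon
  push_neg at hcon
  exact hnot ⟨lt_of_le_of_ne hb1 hcon.1, lt_of_le_of_ne hb2 hcon.2⟩

namespace Setup

variable {a1 a2 q : V} (S : Setup a1 a2 q)

include S

lemma pA_mem_clD2 : pA a1 a2 ∈ closure (D2 a1 a2) := by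
  apply mem_closure_dir _ ((1/2 : ℝ) • a1)
  intro n
  have hs0 : (0:ℝ) < 1/(n+1) := by positivity
  constructor
  · show ⟪a2, _⟫ < 0
    rw [inner_add_right, real_inner_smul_right, real_inner_smul_right, S.YpA, S.h21]
    linarith
  · show 1 < ⟪a1, _⟫ + ⟪a2, _⟫
    simp only [inner_add_right, real_inner_smul_right, S.XpA, S.YpA, S.h21, S.n1]
    linarith

lemma pB_mem_clD6 : pB a1 a2 ∈ closure (D6 a1 a2) := by
  apply mem_closure_dir _ ((1/2 : ℝ) • a2)
  intro n
  have hs0 : (0:ℝ) < 1/(n+1) := by positivity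
  constructor
  · show ⟪a1, _⟫ < 0
    rw [inner_add_right, real_inner_smul_right, real_inner_smul_right, S.XpB, S.h12]
    linarith
  · show 1 < ⟪a1, _⟫ + ⟪a2, _⟫
    simp only [inner_add_right, real_inner_smul_right, S.XpB, S.YpB, S.h12, S.n2]
    linarith

lemma zero_mem_clD4 : (0:V) ∈ closure (D4 a1 a2) := by
  apply mem_closure_dir _ (-(a1 + a2))
  intro n
  have hs0 : (0:ℝ) < 1/(n+1) := by positivity
  constructor
  · show ⟪a1, _⟫ < 0
    rw [inner_add_right, real_inner_smul_right, inner_zero_right, inner_neg_right,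
      inner_add_right, S.n1, S.h12]
    linarith
  · show ⟪a2, _⟫ < 0
    rw [inner_add_right, real_inner_smul_right, inner_zero_right, inner_neg_right,
      inner_add_right, S.n2, S.h21]
    linarith

lemma walls_D2 : ∀ α i, IsWall a1 a2 (D2 a1 a2) α i → pA a1 a2 ∈ Hplane α i := by
  intro α i hw
  obtain ⟨hα, hi, u, ⟨huF, huH⟩, u', ⟨huF', huH'⟩, hne⟩ := hw
  obtain ⟨hu1, hu2, hu3⟩ := frontier_D2 huF
  obtain ⟨hv1, hv2, hv3⟩ := frontier_D2 huF'
  simp only [PosRoots, Set.mem_insert_iff, Set.mem_singleton_iff] at hα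
  simp only [Hplane, Set.mem_setOf_eq] at huH huH' ⊢
  rcases hα with rfl | rfl | rfl <;> rcases hi with rfl | rfl
  · exfalso; push_cast at huH; linarith
  · exfalso
    push_cast at huH huH'
    have h1 : ⟪a2, u⟫ = 0 := by linarith
    have h2 : ⟪a2, u'⟫ = 0 := by linarith
    exact hne (S.pair_inj (by rw [huH, huH']) (by rw [h1, h2]))
  · rw [S.YpA]; norm_num
  · exfalso; push_cast at huH; linarith
  · exfalso; rw [inner_add_left] at huH; push_cast at huH; linarith
  · rw [inner_add_left, S.XpA, S.YpA]; norm_num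

lemma walls_D6 : ∀ α i, IsWall a1 a2 (D6 a1 a2) α i → pB a1 a2 ∈ Hplane α i := by
  intro α i hw
  obtain ⟨hα, hi, u, ⟨huF, huH⟩, u', ⟨huF', huH'⟩, hne⟩ := hw
  obtain ⟨hu1, hu2, hu3⟩ := frontier_D6 huF
  obtain ⟨hv1, hv2, hv3⟩ := frontier_D6 huF'
  simp only [PosRoots, Set.mem_insert_iff, Set.mem_singleton_iff] at hα
  simp only [Hplane, Set.mem_setOf_eq] at huH huH' ⊢
  rcases hα with rfl | rfl | rfl <;> rcases hi with rfl | rfl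
  · rw [S.XpB]; norm_num
  · exfalso; push_cast at huH; linarith
  · exfalso; push_cast at huH; linarith
  · exfalso
    push_cast at huH huH'
    have h1 : ⟪a1, u⟫ = 0 := by linarith
    have h2 : ⟪a1, u'⟫ = 0 := by linarith
    exact hne (S.pair_inj (by rw [h1, h2]) (by rw [huH, huH']))
  · exfalso; rw [inner_add_left] at huH; push_cast at huH; linarith
  · rw [inner_add_left, S.XpB, S.YpB]; norm_num

lemma walls_D4 : ∀ α i, IsWall a1 a2 (D4 a1 a2) α i → (0:V) ∈ Hplane α i := by
  intro α i hw
  obtain ⟨hα, hi, u, ⟨huF, huH⟩, u', ⟨huF', huH'⟩, hne⟩ := hw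
  obtain ⟨hu1, hu2, hu3⟩ := frontier_D4 huF
  obtain ⟨hv1, hv2, hv3⟩ := frontier_D4 huF'
  simp only [PosRoots, Set.mem_insert_iff, Set.mem_singleton_iff] at hα
  simp only [Hplane, Set.mem_setOf_eq] at huH huH' ⊢
  rcases hα with rfl | rfl | rfl <;> rcases hi with rfl | rfl
  · rw [inner_zero_right]; norm_num
  · exfalso; push_cast at huH; linarith
  · rw [inner_zero_right]; norm_num
  · exfalso; push_cast at huH; linarith
  · rw [inner_add_left, inner_zero_right, inner_zero_right]; norm_num
  · exfalso; rw [inner_add_left] at huH; push_cast at huH; linarith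

end Setup

end Geom3
section KeyLemmas
namespace Setup
variable {a1 a2 q : V} (S : Setup a1 a2 q)
include S

lemma key_1_1_D1 (v : V) (hD1 : 1 < ⟪a1, v⟫) (hD2 : 1 < ⟪a2, v⟫)
    (halc : Alc a1 a2 v) :
    Nv a1 a2 (sRefl a1 (1:ℤ) v) + 1 = Nv a1 a2 v := by
  obtain ⟨m, n, ⟨hx, hy⟩ | ⟨hx, hy⟩⟩ := halc
  · -- type 1
    have hb1 : (0:ℤ) < m := by
      have h := hD1
      rw [hx] at h
      have h2 : (0:ℝ) < (m:ℝ) := by linarith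
      exact_mod_cast h2
    have hb2 : (0:ℤ) < n := by
      have h := hD2
      rw [hy] at h
      have h2 : (0:ℝ) < (n:ℝ) := by linarith
      exact_mod_cast h2
    have hA : ⟪a1, sRefl a1 (1:ℤ) v⟫ = ((1 - m : ℤ) : ℝ) + 2/3 := by
      simp only [S.X_s1, hx, hy]; push_cast; ring
    have hB : ⟪a2, sRefl a1 (1:ℤ) v⟫ = ((m + n - 1 : ℤ) : ℝ) + 2/3 := by
      simp only [S.Y_s1, hx, hy]; push_cast; ring
    rw [Nv2 _ _ hA hB, Nv1 m n hx hy]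
    omega
  · -- type 2
    have hb1 : (0:ℤ) < m := by
      have h := hD1
      rw [hx] at h
      have h2 : (0:ℝ) < (m:ℝ) := by linarith
      exact_mod_cast h2
    have hb2 : (0:ℤ) < n := by
      have h := hD2
      rw [hy] at h
      have h2 : (0:ℝ) < (n:ℝ) := by linarith
      exact_mod_cast h2
    have hA : ⟪a1, sRefl a1 (1:ℤ) v⟫ = ((1 - m : ℤ) : ℝ) + 1/3 := by
      simp only [S.X_s1, hx, hy]; push_cast; ring
    have hB : ⟪a2, sRefl a1 (1:ℤ) v⟫ = ((m + n : ℤ) : ℝ) + 1/3 := by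
      simp only [S.Y_s1, hx, hy]; push_cast; ring
    rw [Nv1 _ _ hA hB, Nv2 m n hx hy]
    omega

lemma key_1_1_D2 (v : V) (hD1 : ⟪a2, v⟫ < 0) (hD2 : 1 < ⟪a1, v⟫ + ⟪a2, v⟫)
    (halc : Alc a1 a2 v) :
    Nv a1 a2 (sRefl a1 (1:ℤ) v) + 3 = Nv a1 a2 v := by
  obtain ⟨m, n, ⟨hx, hy⟩ | ⟨hx, hy⟩⟩ := halc
  · -- type 1
    have hb1 : n < 0 := by
      have h := hD1
      rw [hy] at h
      have h2 : (n:ℝ) < 0 := by linarith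
      exact_mod_cast h2
    have hb2 : (0:ℤ) < m + n := by
      have h := hD2
      rw [hx, hy] at h
      have h2 : (0:ℝ) < (m:ℝ) + (n:ℝ) := by linarith
      exact_mod_cast h2
    have hA : ⟪a1, sRefl a1 (1:ℤ) v⟫ = ((1 - m : ℤ) : ℝ) + 2/3 := by
      simp only [S.X_s1, hx, hy]; push_cast; ring
    have hB : ⟪a2, sRefl a1 (1:ℤ) v⟫ = ((m + n - 1 : ℤ) : ℝ) + 2/3 := by
      simp only [S.Y_s1, hx, hy]; push_cast; ring
    rw [Nv2 _ _ hA hB, Nv1 m n hx hy]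
    omega
  · -- type 2
    have hb1 : n < 0 := by
      have h := hD1
      rw [hy] at h
      have h2 : (n:ℝ) < 0 := by linarith
      exact_mod_cast h2
    have hb2 : (-1:ℤ) < m + n := by
      have h := hD2
      rw [hx, hy] at h
      have h2 : (-1:ℝ) < (m:ℝ) + (n:ℝ) := by linarith
      exact_mod_cast h2
    have hA : ⟪a1, sRefl a1 (1:ℤ) v⟫ = ((1 - m : ℤ) : ℝ) + 1/3 := by
      simp only [S.X_s1, hx, hy]; push_cast; ring
    have hB : ⟪a2, sRefl a1 (1:ℤ) v⟫ = ((m + n : ℤ) : ℝ) + 1/3 := by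
      simp only [S.Y_s1, hx, hy]; push_cast; ring
    rw [Nv1 _ _ hA hB, Nv2 m n hx hy]
    omega

lemma key_1_1_D3 (v : V) (hD1 : 1 < ⟪a1, v⟫) (hD2 : ⟪a1, v⟫ + ⟪a2, v⟫ < 0)
    (halc : Alc a1 a2 v) :
    Nv a1 a2 (sRefl a1 (1:ℤ) v) + 1 = Nv a1 a2 v := by
  obtain ⟨m, n, ⟨hx, hy⟩ | ⟨hx, hy⟩⟩ := halc
  · -- type 1
    have hb1 : (0:ℤ) < m := by
      have h := hD1
      rw [hx] at h
      have h2 : (0:ℝ) < (m:ℝ) := by linarith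
      exact_mod_cast h2
    have hb2 : m + n < 0 := by
      have h := hD2
      rw [hx, hy] at h
      have h2 : (m:ℝ) + (n:ℝ) < 0 := by linarith
      exact_mod_cast h2
    have hA : ⟪a1, sRefl a1 (1:ℤ) v⟫ = ((1 - m : ℤ) : ℝ) + 2/3 := by
      simp only [S.X_s1, hx, hy]; push_cast; ring
    have hB : ⟪a2, sRefl a1 (1:ℤ) v⟫ = ((m + n - 1 : ℤ) : ℝ) + 2/3 := by
      simp only [S.Y_s1, hx, hy]; push_cast; ring
    rw [Nv2 _ _ hA hB, Nv1 m n hx hy]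
    omega
  · -- type 2
    have hb1 : (0:ℤ) < m := by
      have h := hD1
      rw [hx] at h
      have h2 : (0:ℝ) < (m:ℝ) := by linarith
      exact_mod_cast h2
    have hb2 : m + n < -1 := by
      have h := hD2
      rw [hx, hy] at h
      have h2 : (m:ℝ) + (n:ℝ) < -1 := by linarith
      exact_mod_cast h2
    have hA : ⟪a1, sRefl a1 (1:ℤ) v⟫ = ((1 - m : ℤ) : ℝ) + 1/3 := by
      simp only [S.X_s1, hx, hy]; push_cast; ring
    have hB : ⟪a2, sRefl a1 (1:ℤ) v⟫ = ((m + n : ℤ) : ℝ) + 1/3 := by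
      simp only [S.Y_s1, hx, hy]; push_cast; ring
    rw [Nv1 _ _ hA hB, Nv2 m n hx hy]
    omega

lemma key_1_0_D4 (v : V) (hD1 : ⟪a1, v⟫ < 0) (hD2 : ⟪a2, v⟫ < 0)
    (halc : Alc a1 a2 v) :
    Nv a1 a2 (sRefl a1 (0:ℤ) v) + 1 = Nv a1 a2 v := by
  obtain ⟨m, n, ⟨hx, hy⟩ | ⟨hx, hy⟩⟩ := halc
  · -- type 1
    have hb1 : m < 0 := by
      have h := hD1
      rw [hx] at h
      have h2 : (m:ℝ) < 0 := by linarith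
      exact_mod_cast h2
    have hb2 : n < 0 := by
      have h := hD2
      rw [hy] at h
      have h2 : (n:ℝ) < 0 := by linarith
      exact_mod_cast h2
    have hA : ⟪a1, sRefl a1 (0:ℤ) v⟫ = ((-m - 1 : ℤ) : ℝ) + 2/3 := by
      simp only [S.X_s1, hx, hy]; push_cast; ring
    have hB : ⟪a2, sRefl a1 (0:ℤ) v⟫ = ((m + n : ℤ) : ℝ) + 2/3 := by
      simp only [S.Y_s1, hx, hy]; push_cast; ring
    rw [Nv2 _ _ hA hB, Nv1 m n hx hy]
    omega
  · -- type 2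
    have hb1 : m < 0 := by
      have h := hD1
      rw [hx] at h
      have h2 : (m:ℝ) < 0 := by linarith
      exact_mod_cast h2
    have hb2 : n < 0 := by
      have h := hD2
      rw [hy] at h
      have h2 : (n:ℝ) < 0 := by linarith
      exact_mod_cast h2
    have hA : ⟪a1, sRefl a1 (0:ℤ) v⟫ = ((-m - 1 : ℤ) : ℝ) + 1/3 := by
      simp only [S.X_s1, hx, hy]; push_cast; ring
    have hB : ⟪a2, sRefl a1 (0:ℤ) v⟫ = ((m + n + 1 : ℤ) : ℝ) + 1/3 := by
      simp only [S.Y_s1, hx, hy]; push_cast; ring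
    rw [Nv1 _ _ hA hB, Nv2 m n hx hy]
    omega

lemma key_1_0_D5 (v : V) (hD1 : 1 < ⟪a2, v⟫) (hD2 : ⟪a1, v⟫ + ⟪a2, v⟫ < 0)
    (halc : Alc a1 a2 v) :
    Nv a1 a2 (sRefl a1 (0:ℤ) v) + 1 = Nv a1 a2 v := by
  obtain ⟨m, n, ⟨hx, hy⟩ | ⟨hx, hy⟩⟩ := halc
  · -- type 1
    have hb1 : (0:ℤ) < n := by
      have h := hD1
      rw [hy] at h
      have h2 : (0:ℝ) < (n:ℝ) := by linarith
      exact_mod_cast h2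
    have hb2 : m + n < 0 := by
      have h := hD2
      rw [hx, hy] at h
      have h2 : (m:ℝ) + (n:ℝ) < 0 := by linarith
      exact_mod_cast h2
    have hA : ⟪a1, sRefl a1 (0:ℤ) v⟫ = ((-m - 1 : ℤ) : ℝ) + 2/3 := by
      simp only [S.X_s1, hx, hy]; push_cast; ring
    have hB : ⟪a2, sRefl a1 (0:ℤ) v⟫ = ((m + n : ℤ) : ℝ) + 2/3 := by
      simp only [S.Y_s1, hx, hy]; push_cast; ring
    rw [Nv2 _ _ hA hB, Nv1 m n hx hy]
    omega
  · -- type 2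
    have hb1 : (0:ℤ) < n := by
      have h := hD1
      rw [hy] at h
      have h2 : (0:ℝ) < (n:ℝ) := by linarith
      exact_mod_cast h2
    have hb2 : m + n < -1 := by
      have h := hD2
      rw [hx, hy] at h
      have h2 : (m:ℝ) + (n:ℝ) < -1 := by linarith
      exact_mod_cast h2
    have hA : ⟪a1, sRefl a1 (0:ℤ) v⟫ = ((-m - 1 : ℤ) : ℝ) + 1/3 := by
      simp only [S.X_s1, hx, hy]; push_cast; ring
    have hB : ⟪a2, sRefl a1 (0:ℤ) v⟫ = ((m + n + 1 : ℤ) : ℝ) + 1/3 := by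
      simp only [S.Y_s1, hx, hy]; push_cast; ring
    rw [Nv1 _ _ hA hB, Nv2 m n hx hy]
    omega

lemma key_1_0_D6 (v : V) (hD1 : ⟪a1, v⟫ < 0) (hD2 : 1 < ⟪a1, v⟫ + ⟪a2, v⟫)
    (halc : Alc a1 a2 v) :
    Nv a1 a2 (sRefl a1 (0:ℤ) v) + 1 = Nv a1 a2 v := by
  obtain ⟨m, n, ⟨hx, hy⟩ | ⟨hx, hy⟩⟩ := halc
  · -- type 1
    have hb1 : m < 0 := by
      have h := hD1
      rw [hx] at h
      have h2 : (m:ℝ) < 0 := by linarith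
      exact_mod_cast h2
    have hb2 : (0:ℤ) < m + n := by
      have h := hD2
      rw [hx, hy] at h
      have h2 : (0:ℝ) < (m:ℝ) + (n:ℝ) := by linarith
      exact_mod_cast h2
    have hA : ⟪a1, sRefl a1 (0:ℤ) v⟫ = ((-m - 1 : ℤ) : ℝ) + 2/3 := by
      simp only [S.X_s1, hx, hy]; push_cast; ring
    have hB : ⟪a2, sRefl a1 (0:ℤ) v⟫ = ((m + n : ℤ) : ℝ) + 2/3 := by
      simp only [S.Y_s1, hx, hy]; push_cast; ring
    rw [Nv2 _ _ hA hB, Nv1 m n hx hy]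
    omega
  · -- type 2
    have hb1 : m < 0 := by
      have h := hD1
      rw [hx] at h
      have h2 : (m:ℝ) < 0 := by linarith
      exact_mod_cast h2
    have hb2 : (-1:ℤ) < m + n := by
      have h := hD2
      rw [hx, hy] at h
      have h2 : (-1:ℝ) < (m:ℝ) + (n:ℝ) := by linarith
      exact_mod_cast h2
    have hA : ⟪a1, sRefl a1 (0:ℤ) v⟫ = ((-m - 1 : ℤ) : ℝ) + 1/3 := by
      simp only [S.X_s1, hx, hy]; push_cast; ring
    have hB : ⟪a2, sRefl a1 (0:ℤ) v⟫ = ((m + n + 1 : ℤ) : ℝ) + 1/3 := by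
      simp only [S.Y_s1, hx, hy]; push_cast; ring
    rw [Nv1 _ _ hA hB, Nv2 m n hx hy]
    omega

lemma key_2_1_D1 (v : V) (hD1 : 1 < ⟪a1, v⟫) (hD2 : 1 < ⟪a2, v⟫)
    (halc : Alc a1 a2 v) :
    Nv a1 a2 (sRefl a2 (1:ℤ) v) + 1 = Nv a1 a2 v := by
  obtain ⟨m, n, ⟨hx, hy⟩ | ⟨hx, hy⟩⟩ := halc
  · -- type 1
    have hb1 : (0:ℤ) < m := by
      have h := hD1
      rw [hx] at h
      have h2 : (0:ℝ) < (m:ℝ) := by linarith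
      exact_mod_cast h2
    have hb2 : (0:ℤ) < n := by
      have h := hD2
      rw [hy] at h
      have h2 : (0:ℝ) < (n:ℝ) := by linarith
      exact_mod_cast h2
    have hA : ⟪a1, sRefl a2 (1:ℤ) v⟫ = ((m + n - 1 : ℤ) : ℝ) + 2/3 := by
      simp only [S.X_s2, hx, hy]; push_cast; ring
    have hB : ⟪a2, sRefl a2 (1:ℤ) v⟫ = ((1 - n : ℤ) : ℝ) + 2/3 := by
      simp only [S.Y_s2, hx, hy]; push_cast; ring
    rw [Nv2 _ _ hA hB, Nv1 m n hx hy]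
    omega
  · -- type 2
    have hb1 : (0:ℤ) < m := by
      have h := hD1
      rw [hx] at h
      have h2 : (0:ℝ) < (m:ℝ) := by linarith
      exact_mod_cast h2
    have hb2 : (0:ℤ) < n := by
      have h := hD2
      rw [hy] at h
      have h2 : (0:ℝ) < (n:ℝ) := by linarith
      exact_mod_cast h2
    have hA : ⟪a1, sRefl a2 (1:ℤ) v⟫ = ((m + n : ℤ) : ℝ) + 1/3 := by
      simp only [S.X_s2, hx, hy]; push_cast; ring
    have hB : ⟪a2, sRefl a2 (1:ℤ) v⟫ = ((1 - n : ℤ) : ℝ) + 1/3 := by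
      simp only [S.Y_s2, hx, hy]; push_cast; ring
    rw [Nv1 _ _ hA hB, Nv2 m n hx hy]
    omega

lemma key_2_1_D5 (v : V) (hD1 : 1 < ⟪a2, v⟫) (hD2 : ⟪a1, v⟫ + ⟪a2, v⟫ < 0)
    (halc : Alc a1 a2 v) :
    Nv a1 a2 (sRefl a2 (1:ℤ) v) + 1 = Nv a1 a2 v := by
  obtain ⟨m, n, ⟨hx, hy⟩ | ⟨hx, hy⟩⟩ := halc
  · -- type 1
    have hb1 : (0:ℤ) < n := by
      have h := hD1
      rw [hy] at h
      have h2 : (0:ℝ) < (n:ℝ) := by linarith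
      exact_mod_cast h2
    have hb2 : m + n < 0 := by
      have h := hD2
      rw [hx, hy] at h
      have h2 : (m:ℝ) + (n:ℝ) < 0 := by linarith
      exact_mod_cast h2
    have hA : ⟪a1, sRefl a2 (1:ℤ) v⟫ = ((m + n - 1 : ℤ) : ℝ) + 2/3 := by
      simp only [S.X_s2, hx, hy]; push_cast; ring
    have hB : ⟪a2, sRefl a2 (1:ℤ) v⟫ = ((1 - n : ℤ) : ℝ) + 2/3 := by
      simp only [S.Y_s2, hx, hy]; push_cast; ring
    rw [Nv2 _ _ hA hB, Nv1 m n hx hy]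
    omega
  · -- type 2
    have hb1 : (0:ℤ) < n := by
      have h := hD1
      rw [hy] at h
      have h2 : (0:ℝ) < (n:ℝ) := by linarith
      exact_mod_cast h2
    have hb2 : m + n < -1 := by
      have h := hD2
      rw [hx, hy] at h
      have h2 : (m:ℝ) + (n:ℝ) < -1 := by linarith
      exact_mod_cast h2
    have hA : ⟪a1, sRefl a2 (1:ℤ) v⟫ = ((m + n : ℤ) : ℝ) + 1/3 := by
      simp only [S.X_s2, hx, hy]; push_cast; ring
    have hB : ⟪a2, sRefl a2 (1:ℤ) v⟫ = ((1 - n : ℤ) : ℝ) + 1/3 := by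
      simp only [S.Y_s2, hx, hy]; push_cast; ring
    rw [Nv1 _ _ hA hB, Nv2 m n hx hy]
    omega

lemma key_2_1_D6 (v : V) (hD1 : ⟪a1, v⟫ < 0) (hD2 : 1 < ⟪a1, v⟫ + ⟪a2, v⟫)
    (halc : Alc a1 a2 v) :
    Nv a1 a2 (sRefl a2 (1:ℤ) v) + 3 = Nv a1 a2 v := by
  obtain ⟨m, n, ⟨hx, hy⟩ | ⟨hx, hy⟩⟩ := halc
  · -- type 1
    have hb1 : m < 0 := by
      have h := hD1
      rw [hx] at h
      have h2 : (m:ℝ) < 0 := by linarith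
      exact_mod_cast h2
    have hb2 : (0:ℤ) < m + n := by
      have h := hD2
      rw [hx, hy] at h
      have h2 : (0:ℝ) < (m:ℝ) + (n:ℝ) := by linarith
      exact_mod_cast h2
    have hA : ⟪a1, sRefl a2 (1:ℤ) v⟫ = ((m + n - 1 : ℤ) : ℝ) + 2/3 := by
      simp only [S.X_s2, hx, hy]; push_cast; ring
    have hB : ⟪a2, sRefl a2 (1:ℤ) v⟫ = ((1 - n : ℤ) : ℝ) + 2/3 := by
      simp only [S.Y_s2, hx, hy]; push_cast; ring
    rw [Nv2 _ _ hA hB, Nv1 m n hx hy]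
    omega
  · -- type 2
    have hb1 : m < 0 := by
      have h := hD1
      rw [hx] at h
      have h2 : (m:ℝ) < 0 := by linarith
      exact_mod_cast h2
    have hb2 : (-1:ℤ) < m + n := by
      have h := hD2
      rw [hx, hy] at h
      have h2 : (-1:ℝ) < (m:ℝ) + (n:ℝ) := by linarith
      exact_mod_cast h2
    have hA : ⟪a1, sRefl a2 (1:ℤ) v⟫ = ((m + n : ℤ) : ℝ) + 1/3 := by
      simp only [S.X_s2, hx, hy]; push_cast; ring
    have hB : ⟪a2, sRefl a2 (1:ℤ) v⟫ = ((1 - n : ℤ) : ℝ) + 1/3 := by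
      simp only [S.Y_s2, hx, hy]; push_cast; ring
    rw [Nv1 _ _ hA hB, Nv2 m n hx hy]
    omega

lemma key_2_0_D2 (v : V) (hD1 : ⟪a2, v⟫ < 0) (hD2 : 1 < ⟪a1, v⟫ + ⟪a2, v⟫)
    (halc : Alc a1 a2 v) :
    Nv a1 a2 (sRefl a2 (0:ℤ) v) + 1 = Nv a1 a2 v := by
  obtain ⟨m, n, ⟨hx, hy⟩ | ⟨hx, hy⟩⟩ := halc
  · -- type 1
    have hb1 : n < 0 := by
      have h := hD1
      rw [hy] at h
      have h2 : (n:ℝ) < 0 := by linarith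
      exact_mod_cast h2
    have hb2 : (0:ℤ) < m + n := by
      have h := hD2
      rw [hx, hy] at h
      have h2 : (0:ℝ) < (m:ℝ) + (n:ℝ) := by linarith
      exact_mod_cast h2
    have hA : ⟪a1, sRefl a2 (0:ℤ) v⟫ = ((m + n : ℤ) : ℝ) + 2/3 := by
      simp only [S.X_s2, hx, hy]; push_cast; ring
    have hB : ⟪a2, sRefl a2 (0:ℤ) v⟫ = ((-n - 1 : ℤ) : ℝ) + 2/3 := by
      simp only [S.Y_s2, hx, hy]; push_cast; ring
    rw [Nv2 _ _ hA hB, Nv1 m n hx hy]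
    omega
  · -- type 2
    have hb1 : n < 0 := by
      have h := hD1
      rw [hy] at h
      have h2 : (n:ℝ) < 0 := by linarith
      exact_mod_cast h2
    have hb2 : (-1:ℤ) < m + n := by
      have h := hD2
      rw [hx, hy] at h
      have h2 : (-1:ℝ) < (m:ℝ) + (n:ℝ) := by linarith
      exact_mod_cast h2
    have hA : ⟪a1, sRefl a2 (0:ℤ) v⟫ = ((m + n + 1 : ℤ) : ℝ) + 1/3 := by
      simp only [S.X_s2, hx, hy]; push_cast; ring
    have hB : ⟪a2, sRefl a2 (0:ℤ) v⟫ = ((-n - 1 : ℤ) : ℝ) + 1/3 := by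
      simp only [S.Y_s2, hx, hy]; push_cast; ring
    rw [Nv1 _ _ hA hB, Nv2 m n hx hy]
    omega

lemma key_2_0_D3 (v : V) (hD1 : 1 < ⟪a1, v⟫) (hD2 : ⟪a1, v⟫ + ⟪a2, v⟫ < 0)
    (halc : Alc a1 a2 v) :
    Nv a1 a2 (sRefl a2 (0:ℤ) v) + 1 = Nv a1 a2 v := by
  obtain ⟨m, n, ⟨hx, hy⟩ | ⟨hx, hy⟩⟩ := halc
  · -- type 1
    have hb1 : (0:ℤ) < m := by
      have h := hD1
      rw [hx] at h
      have h2 : (0:ℝ) < (m:ℝ) := by linarith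
      exact_mod_cast h2
    have hb2 : m + n < 0 := by
      have h := hD2
      rw [hx, hy] at h
      have h2 : (m:ℝ) + (n:ℝ) < 0 := by linarith
      exact_mod_cast h2
    have hA : ⟪a1, sRefl a2 (0:ℤ) v⟫ = ((m + n : ℤ) : ℝ) + 2/3 := by
      simp only [S.X_s2, hx, hy]; push_cast; ring
    have hB : ⟪a2, sRefl a2 (0:ℤ) v⟫ = ((-n - 1 : ℤ) : ℝ) + 2/3 := by
      simp only [S.Y_s2, hx, hy]; push_cast; ring
    rw [Nv2 _ _ hA hB, Nv1 m n hx hy]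
    omega
  · -- type 2
    have hb1 : (0:ℤ) < m := by
      have h := hD1
      rw [hx] at h
      have h2 : (0:ℝ) < (m:ℝ) := by linarith
      exact_mod_cast h2
    have hb2 : m + n < -1 := by
      have h := hD2
      rw [hx, hy] at h
      have h2 : (m:ℝ) + (n:ℝ) < -1 := by linarith
      exact_mod_cast h2
    have hA : ⟪a1, sRefl a2 (0:ℤ) v⟫ = ((m + n + 1 : ℤ) : ℝ) + 1/3 := by
      simp only [S.X_s2, hx, hy]; push_cast; ring
    have hB : ⟪a2, sRefl a2 (0:ℤ) v⟫ = ((-n - 1 : ℤ) : ℝ) + 1/3 := by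
      simp only [S.Y_s2, hx, hy]; push_cast; ring
    rw [Nv1 _ _ hA hB, Nv2 m n hx hy]
    omega

lemma key_2_0_D4 (v : V) (hD1 : ⟪a1, v⟫ < 0) (hD2 : ⟪a2, v⟫ < 0)
    (halc : Alc a1 a2 v) :
    Nv a1 a2 (sRefl a2 (0:ℤ) v) + 1 = Nv a1 a2 v := by
  obtain ⟨m, n, ⟨hx, hy⟩ | ⟨hx, hy⟩⟩ := halc
  · -- type 1
    have hb1 : m < 0 := by
      have h := hD1
      rw [hx] at h
      have h2 : (m:ℝ) < 0 := by linarith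
      exact_mod_cast h2
    have hb2 : n < 0 := by
      have h := hD2
      rw [hy] at h
      have h2 : (n:ℝ) < 0 := by linarith
      exact_mod_cast h2
    have hA : ⟪a1, sRefl a2 (0:ℤ) v⟫ = ((m + n : ℤ) : ℝ) + 2/3 := by
      simp only [S.X_s2, hx, hy]; push_cast; ring
    have hB : ⟪a2, sRefl a2 (0:ℤ) v⟫ = ((-n - 1 : ℤ) : ℝ) + 2/3 := by
      simp only [S.Y_s2, hx, hy]; push_cast; ring
    rw [Nv2 _ _ hA hB, Nv1 m n hx hy]
    omega
  · -- type 2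
    have hb1 : m < 0 := by
      have h := hD1
      rw [hx] at h
      have h2 : (m:ℝ) < 0 := by linarith
      exact_mod_cast h2
    have hb2 : n < 0 := by
      have h := hD2
      rw [hy] at h
      have h2 : (n:ℝ) < 0 := by linarith
      exact_mod_cast h2
    have hA : ⟪a1, sRefl a2 (0:ℤ) v⟫ = ((m + n + 1 : ℤ) : ℝ) + 1/3 := by
      simp only [S.X_s2, hx, hy]; push_cast; ring
    have hB : ⟪a2, sRefl a2 (0:ℤ) v⟫ = ((-n - 1 : ℤ) : ℝ) + 1/3 := by
      simp only [S.Y_s2, hx, hy]; push_cast; ring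
    rw [Nv1 _ _ hA hB, Nv2 m n hx hy]
    omega

lemma key_3_1_D1 (v : V) (hD1 : 1 < ⟪a1, v⟫) (hD2 : 1 < ⟪a2, v⟫)
    (halc : Alc a1 a2 v) :
    Nv a1 a2 (sRefl (a1 + a2) (1:ℤ) v) + 1 = Nv a1 a2 v := by
  obtain ⟨m, n, ⟨hx, hy⟩ | ⟨hx, hy⟩⟩ := halc
  · -- type 1
    have hb1 : (0:ℤ) < m := by
      have h := hD1
      rw [hx] at h
      have h2 : (0:ℝ) < (m:ℝ) := by linarith
      exact_mod_cast h2
    have hb2 : (0:ℤ) < n := by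
      have h := hD2
      rw [hy] at h
      have h2 : (0:ℝ) < (n:ℝ) := by linarith
      exact_mod_cast h2
    have hA : ⟪a1, sRefl (a1 + a2) (1:ℤ) v⟫ = ((-n : ℤ) : ℝ) + 2/3 := by
      simp only [S.X_s3, hx, hy]; push_cast; ring
    have hB : ⟪a2, sRefl (a1 + a2) (1:ℤ) v⟫ = ((-m : ℤ) : ℝ) + 2/3 := by
      simp only [S.Y_s3, hx, hy]; push_cast; ring
    rw [Nv2 _ _ hA hB, Nv1 m n hx hy]
    omega
  · -- type 2
    have hb1 : (0:ℤ) < m := by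
      have h := hD1
      rw [hx] at h
      have h2 : (0:ℝ) < (m:ℝ) := by linarith
      exact_mod_cast h2
    have hb2 : (0:ℤ) < n := by
      have h := hD2
      rw [hy] at h
      have h2 : (0:ℝ) < (n:ℝ) := by linarith
      exact_mod_cast h2
    have hA : ⟪a1, sRefl (a1 + a2) (1:ℤ) v⟫ = ((-n : ℤ) : ℝ) + 1/3 := by
      simp only [S.X_s3, hx, hy]; push_cast; ring
    have hB : ⟪a2, sRefl (a1 + a2) (1:ℤ) v⟫ = ((-m : ℤ) : ℝ) + 1/3 := by
      simp only [S.Y_s3, hx, hy]; push_cast; ring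
    rw [Nv1 _ _ hA hB, Nv2 m n hx hy]
    omega

lemma key_3_1_D2 (v : V) (hD1 : ⟪a2, v⟫ < 0) (hD2 : 1 < ⟪a1, v⟫ + ⟪a2, v⟫)
    (halc : Alc a1 a2 v) :
    Nv a1 a2 (sRefl (a1 + a2) (1:ℤ) v) + 1 = Nv a1 a2 v := by
  obtain ⟨m, n, ⟨hx, hy⟩ | ⟨hx, hy⟩⟩ := halc
  · -- type 1
    have hb1 : n < 0 := by
      have h := hD1
      rw [hy] at h
      have h2 : (n:ℝ) < 0 := by linarith
      exact_mod_cast h2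
    have hb2 : (0:ℤ) < m + n := by
      have h := hD2
      rw [hx, hy] at h
      have h2 : (0:ℝ) < (m:ℝ) + (n:ℝ) := by linarith
      exact_mod_cast h2
    have hA : ⟪a1, sRefl (a1 + a2) (1:ℤ) v⟫ = ((-n : ℤ) : ℝ) + 2/3 := by
      simp only [S.X_s3, hx, hy]; push_cast; ring
    have hB : ⟪a2, sRefl (a1 + a2) (1:ℤ) v⟫ = ((-m : ℤ) : ℝ) + 2/3 := by
      simp only [S.Y_s3, hx, hy]; push_cast; ring
    rw [Nv2 _ _ hA hB, Nv1 m n hx hy]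
    omega
  · -- type 2
    have hb1 : n < 0 := by
      have h := hD1
      rw [hy] at h
      have h2 : (n:ℝ) < 0 := by linarith
      exact_mod_cast h2
    have hb2 : (-1:ℤ) < m + n := by
      have h := hD2
      rw [hx, hy] at h
      have h2 : (-1:ℝ) < (m:ℝ) + (n:ℝ) := by linarith
      exact_mod_cast h2
    have hA : ⟪a1, sRefl (a1 + a2) (1:ℤ) v⟫ = ((-n : ℤ) : ℝ) + 1/3 := by
      simp only [S.X_s3, hx, hy]; push_cast; ring
    have hB : ⟪a2, sRefl (a1 + a2) (1:ℤ) v⟫ = ((-m : ℤ) : ℝ) + 1/3 := by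
      simp only [S.Y_s3, hx, hy]; push_cast; ring
    rw [Nv1 _ _ hA hB, Nv2 m n hx hy]
    omega

lemma key_3_1_D6 (v : V) (hD1 : ⟪a1, v⟫ < 0) (hD2 : 1 < ⟪a1, v⟫ + ⟪a2, v⟫)
    (halc : Alc a1 a2 v) :
    Nv a1 a2 (sRefl (a1 + a2) (1:ℤ) v) + 1 = Nv a1 a2 v := by
  obtain ⟨m, n, ⟨hx, hy⟩ | ⟨hx, hy⟩⟩ := halc
  · -- type 1
    have hb1 : m < 0 := by
      have h := hD1
      rw [hx] at h
      have h2 : (m:ℝ) < 0 := by linarith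
      exact_mod_cast h2
    have hb2 : (0:ℤ) < m + n := by
      have h := hD2
      rw [hx, hy] at h
      have h2 : (0:ℝ) < (m:ℝ) + (n:ℝ) := by linarith
      exact_mod_cast h2
    have hA : ⟪a1, sRefl (a1 + a2) (1:ℤ) v⟫ = ((-n : ℤ) : ℝ) + 2/3 := by
      simp only [S.X_s3, hx, hy]; push_cast; ring
    have hB : ⟪a2, sRefl (a1 + a2) (1:ℤ) v⟫ = ((-m : ℤ) : ℝ) + 2/3 := by
      simp only [S.Y_s3, hx, hy]; push_cast; ring
    rw [Nv2 _ _ hA hB, Nv1 m n hx hy]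
    omega
  · -- type 2
    have hb1 : m < 0 := by
      have h := hD1
      rw [hx] at h
      have h2 : (m:ℝ) < 0 := by linarith
      exact_mod_cast h2
    have hb2 : (-1:ℤ) < m + n := by
      have h := hD2
      rw [hx, hy] at h
      have h2 : (-1:ℝ) < (m:ℝ) + (n:ℝ) := by linarith
      exact_mod_cast h2
    have hA : ⟪a1, sRefl (a1 + a2) (1:ℤ) v⟫ = ((-n : ℤ) : ℝ) + 1/3 := by
      simp only [S.X_s3, hx, hy]; push_cast; ring
    have hB : ⟪a2, sRefl (a1 + a2) (1:ℤ) v⟫ = ((-m : ℤ) : ℝ) + 1/3 := by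
      simp only [S.Y_s3, hx, hy]; push_cast; ring
    rw [Nv1 _ _ hA hB, Nv2 m n hx hy]
    omega

lemma key_3_0_D3 (v : V) (hD1 : 1 < ⟪a1, v⟫) (hD2 : ⟪a1, v⟫ + ⟪a2, v⟫ < 0)
    (halc : Alc a1 a2 v) :
    Nv a1 a2 (sRefl (a1 + a2) (0:ℤ) v) + 1 = Nv a1 a2 v := by
  obtain ⟨m, n, ⟨hx, hy⟩ | ⟨hx, hy⟩⟩ := halc
  · -- type 1
    have hb1 : (0:ℤ) < m := by
      have h := hD1
      rw [hx] at h
      have h2 : (0:ℝ) < (m:ℝ) := by linarith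
      exact_mod_cast h2
    have hb2 : m + n < 0 := by
      have h := hD2
      rw [hx, hy] at h
      have h2 : (m:ℝ) + (n:ℝ) < 0 := by linarith
      exact_mod_cast h2
    have hA : ⟪a1, sRefl (a1 + a2) (0:ℤ) v⟫ = ((-n - 1 : ℤ) : ℝ) + 2/3 := by
      simp only [S.X_s3, hx, hy]; push_cast; ring
    have hB : ⟪a2, sRefl (a1 + a2) (0:ℤ) v⟫ = ((-m - 1 : ℤ) : ℝ) + 2/3 := by
      simp only [S.Y_s3, hx, hy]; push_cast; ring
    rw [Nv2 _ _ hA hB, Nv1 m n hx hy]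
    omega
  · -- type 2
    have hb1 : (0:ℤ) < m := by
      have h := hD1
      rw [hx] at h
      have h2 : (0:ℝ) < (m:ℝ) := by linarith
      exact_mod_cast h2
    have hb2 : m + n < -1 := by
      have h := hD2
      rw [hx, hy] at h
      have h2 : (m:ℝ) + (n:ℝ) < -1 := by linarith
      exact_mod_cast h2
    have hA : ⟪a1, sRefl (a1 + a2) (0:ℤ) v⟫ = ((-n - 1 : ℤ) : ℝ) + 1/3 := by
      simp only [S.X_s3, hx, hy]; push_cast; ring
    have hB : ⟪a2, sRefl (a1 + a2) (0:ℤ) v⟫ = ((-m - 1 : ℤ) : ℝ) + 1/3 := by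
      simp only [S.Y_s3, hx, hy]; push_cast; ring
    rw [Nv1 _ _ hA hB, Nv2 m n hx hy]
    omega

lemma key_3_0_D4 (v : V) (hD1 : ⟪a1, v⟫ < 0) (hD2 : ⟪a2, v⟫ < 0)
    (halc : Alc a1 a2 v) :
    Nv a1 a2 (sRefl (a1 + a2) (0:ℤ) v) + 3 = Nv a1 a2 v := by
  obtain ⟨m, n, ⟨hx, hy⟩ | ⟨hx, hy⟩⟩ := halc
  · -- type 1
    have hb1 : m < 0 := by
      have h := hD1
      rw [hx] at h
      have h2 : (m:ℝ) < 0 := by linarith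
      exact_mod_cast h2
    have hb2 : n < 0 := by
      have h := hD2
      rw [hy] at h
      have h2 : (n:ℝ) < 0 := by linarith
      exact_mod_cast h2
    have hA : ⟪a1, sRefl (a1 + a2) (0:ℤ) v⟫ = ((-n - 1 : ℤ) : ℝ) + 2/3 := by
      simp only [S.X_s3, hx, hy]; push_cast; ring
    have hB : ⟪a2, sRefl (a1 + a2) (0:ℤ) v⟫ = ((-m - 1 : ℤ) : ℝ) + 2/3 := by
      simp only [S.Y_s3, hx, hy]; push_cast; ring
    rw [Nv2 _ _ hA hB, Nv1 m n hx hy]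
    omega
  · -- type 2
    have hb1 : m < 0 := by
      have h := hD1
      rw [hx] at h
      have h2 : (m:ℝ) < 0 := by linarith
      exact_mod_cast h2
    have hb2 : n < 0 := by
      have h := hD2
      rw [hy] at h
      have h2 : (n:ℝ) < 0 := by linarith
      exact_mod_cast h2
    have hA : ⟪a1, sRefl (a1 + a2) (0:ℤ) v⟫ = ((-n - 1 : ℤ) : ℝ) + 1/3 := by
      simp only [S.X_s3, hx, hy]; push_cast; ring
    have hB : ⟪a2, sRefl (a1 + a2) (0:ℤ) v⟫ = ((-m - 1 : ℤ) : ℝ) + 1/3 := by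
      simp only [S.Y_s3, hx, hy]; push_cast; ring
    rw [Nv1 _ _ hA hB, Nv2 m n hx hy]
    omega

lemma key_3_0_D5 (v : V) (hD1 : 1 < ⟪a2, v⟫) (hD2 : ⟪a1, v⟫ + ⟪a2, v⟫ < 0)
    (halc : Alc a1 a2 v) :
    Nv a1 a2 (sRefl (a1 + a2) (0:ℤ) v) + 1 = Nv a1 a2 v := by
  obtain ⟨m, n, ⟨hx, hy⟩ | ⟨hx, hy⟩⟩ := halc
  · -- type 1
    have hb1 : (0:ℤ) < n := by
      have h := hD1
      rw [hy] at h
      have h2 : (0:ℝ) < (n:ℝ) := by linarith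
      exact_mod_cast h2
    have hb2 : m + n < 0 := by
      have h := hD2
      rw [hx, hy] at h
      have h2 : (m:ℝ) + (n:ℝ) < 0 := by linarith
      exact_mod_cast h2
    have hA : ⟪a1, sRefl (a1 + a2) (0:ℤ) v⟫ = ((-n - 1 : ℤ) : ℝ) + 2/3 := by
      simp only [S.X_s3, hx, hy]; push_cast; ring
    have hB : ⟪a2, sRefl (a1 + a2) (0:ℤ) v⟫ = ((-m - 1 : ℤ) : ℝ) + 2/3 := by
      simp only [S.Y_s3, hx, hy]; push_cast; ring
    rw [Nv2 _ _ hA hB, Nv1 m n hx hy]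
    omega
  · -- type 2
    have hb1 : (0:ℤ) < n := by
      have h := hD1
      rw [hy] at h
      have h2 : (0:ℝ) < (n:ℝ) := by linarith
      exact_mod_cast h2
    have hb2 : m + n < -1 := by
      have h := hD2
      rw [hx, hy] at h
      have h2 : (m:ℝ) + (n:ℝ) < -1 := by linarith
      exact_mod_cast h2
    have hA : ⟪a1, sRefl (a1 + a2) (0:ℤ) v⟫ = ((-n - 1 : ℤ) : ℝ) + 1/3 := by
      simp only [S.X_s3, hx, hy]; push_cast; ring
    have hB : ⟪a2, sRefl (a1 + a2) (0:ℤ) v⟫ = ((-m - 1 : ℤ) : ℝ) + 1/3 := by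
      simp only [S.Y_s3, hx, hy]; push_cast; ring
    rw [Nv1 _ _ hA hB, Nv2 m n hx hy]
    omega

end Setup
end KeyLemmas
set_option maxHeartbeats 1000000 in
/-- **Lemma.** Let `E = H_{δ,ε}` be an edge of the fundamental `δ`-root strip, `𝒞` a chamber
on the opposite side of `E` from the strip, `z ∈ W` with `z q ∈ 𝒞`, and `z' = s_{δ,ε} z`.
Then `ℓ(z') < ℓ(z)`, so `z' < z`; more precisely `ℓ(z') = ℓ(z) − 3` if `E ∩ cl(A₀)` is a single
point equal to the vertex of `𝒞`, and `ℓ(z') = ℓ(z) − 1` otherwise. -/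
theorem length_reflect_across_strip_edge
    (a1 a2 q : V)
    (hnorm1 : ⟪a1, a1⟫ = 2) (hnorm2 : ⟪a2, a2⟫ = 2) (hip : ⟪a1, a2⟫ = -1)
    (hq1 : ⟪a1, q⟫ = 1/3) (hq2 : ⟪a2, q⟫ = 1/3)
    (δ : V) (hδ : δ ∈ PosRoots a1 a2) (ε : ℤ) (hε : ε = 0 ∨ ε = 1)
    (C : Set V) (hC : IsChamber a1 a2 C)
    (hside1 : ε = 1 → ∀ v ∈ C, 1 < ⟪δ, v⟫)
    (hside0 : ε = 0 → ∀ v ∈ C, ⟪δ, v⟫ < 0)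
    (z : AffWeyl a1 a2) (hz : act z q ∈ C)
    (r : AffWeyl a1 a2) (hr : ∀ v : V, act r v = sRefl δ ε v) :
    len a1 a2 (r * z) < len a1 a2 z ∧ BruhatLT a1 a2 (r * z) z ∧
    ((∃ p : V, Hplane δ ε ∩ closure (A0 a1 a2) = {p} ∧ p ∈ closure C ∧
        ∀ α i, IsWall a1 a2 C α i → p ∈ Hplane α i) →
      len a1 a2 (r * z) + 3 = len a1 a2 z) ∧
    ((¬ ∃ p : V, Hplane δ ε ∩ closure (A0 a1 a2) = {p} ∧ p ∈ closure C ∧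
        ∀ α i, IsWall a1 a2 C α i → p ∈ Hplane α i) →
      len a1 a2 (r * z) + 1 = len a1 a2 z) := by
  
  have S : Setup a1 a2 q := ⟨hnorm1, hnorm2, hip, hq1, hq2⟩
  have hδ2 : ⟪δ, δ⟫ = 2 := S.norm_posroot hδ
  have hrr : r * r = 1 := by
    apply Subtype.ext
    apply Equiv.ext
    intro v
    simp only [Subgroup.coe_mul, Equiv.Perm.mul_apply, OneMemClass.coe_one,
      Equiv.Perm.one_apply]
    have e1 : (r : Equiv.Perm V) v = sRefl δ ε v := hr v
    have e2 : (r : Equiv.Perm V) (sRefl δ ε v) = sRefl δ ε (sRefl δ ε v) := hr _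
    rw [e1, e2]
    exact sRefl_invol hδ2 ε v
  have hz_eq : z = r * (r * z) := by rw [← mul_assoc, hrr, one_mul]
  have hreflW : IsReflW a1 a2 (r : Equiv.Perm V) := ⟨δ, Or.inl hδ, ε, hr⟩
  have hbru : len a1 a2 (r * z) < len a1 a2 z → BruhatLT a1 a2 (r * z) z := by
    intro hlen
    refine ⟨Relation.ReflTransGen.single ⟨r, hreflW, hz_eq, hlen⟩, ?_⟩
    intro h
    rw [h] at hlen
    exact lt_irrefl _ hlen
  have hlz : len a1 a2 z = Nv a1 a2 (act z q) := S.len_eq z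
  have hact : act (r * z) q = sRefl δ ε (act z q) := by
    show ((r * z : AffWeyl a1 a2) : Equiv.Perm V) q = _
    rw [Subgroup.coe_mul, Equiv.Perm.mul_apply]
    exact hr _
  have hlrz : len a1 a2 (r * z) = Nv a1 a2 (sRefl δ ε (act z q)) := by
    rw [S.len_eq (r * z), hact]
  have halc : Alc a1 a2 (act z q) := S.alc_act z
  have hzcompl : act z q ∈ (StripUnion a1 a2)ᶜ := by
    obtain ⟨v0, hv0, hCeq⟩ := id hC
    rw [hCeq] at hz
    exact connectedComponentIn_subset _ _ hz
  have hexh := exhaust hzcompl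
  have hδ'' : δ = a1 ∨ δ = a2 ∨ δ = a1 + a2 := by
    simpa [PosRoots, Set.mem_insert_iff, Set.mem_singleton_iff] using hδ
  have hδ' : a1 = δ ∨ a2 = δ ∨ a1 + a2 = δ := by
    rcases hδ'' with h | h | h
    · exact Or.inl h.symm
    · exact Or.inr (Or.inl h.symm)
    · exact Or.inr (Or.inr h.symm)
  clear hδ''
  rcases hδ' with rfl | rfl | rfl <;> rcases hε with rfl | rfl <;>
    rcases hexh with hD | hD | hD | hD | hD | hD
  · exfalso
    obtain ⟨h1, h2⟩ := hD
    have hs := hside0 rfl _ hz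
    linarith
  · exfalso
    obtain ⟨h1, h2⟩ := hD
    have hs := hside0 rfl _ hz
    linarith
  · exfalso
    obtain ⟨h1, h2⟩ := hD
    have hs := hside0 rfl _ hz
    linarith
  · -- δ case 1, ε = 0, chamber D4
    have hCD : C = D4 a1 a2 := chamber_eq_D4 hC hz hD
    have hkey := S.key_1_0_D4 (act z q) hD.1 hD.2 halc
    refine ⟨by omega, hbru (by omega), fun hcond => ?_, fun _ => by omega⟩
    obtain ⟨p, hsing, -, -⟩ := hcond
    exact (S.not_sing_a1 p hsing).elim
  · -- δ case 1, ε = 0, chamber D5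
    have hCD : C = D5 a1 a2 := chamber_eq_D5 hC hz hD
    have hkey := S.key_1_0_D5 (act z q) hD.1 hD.2 halc
    refine ⟨by omega, hbru (by omega), fun hcond => ?_, fun _ => by omega⟩
    obtain ⟨p, hsing, -, -⟩ := hcond
    exact (S.not_sing_a1 p hsing).elim
  · -- δ case 1, ε = 0, chamber D6
    have hCD : C = D6 a1 a2 := chamber_eq_D6 hC hz hD
    have hkey := S.key_1_0_D6 (act z q) hD.1 hD.2 halc
    refine ⟨by omega, hbru (by omega), fun hcond => ?_, fun _ => by omega⟩
    obtain ⟨p, hsing, -, -⟩ := hcond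
    exact (S.not_sing_a1 p hsing).elim
  · -- δ case 1, ε = 1, chamber D1
    have hCD : C = D1 a1 a2 := chamber_eq_D1 hC hz hD
    have hkey := S.key_1_1_D1 (act z q) hD.1 hD.2 halc
    refine ⟨by omega, hbru (by omega), fun hcond => ?_, fun _ => by omega⟩
    exfalso
    obtain ⟨p, hsing, hpC, -⟩ := hcond
    have hp : p ∈ Hplane a1 (1:ℤ) ∩ closure (A0 a1 a2) := by
      rw [hsing]; exact Set.mem_singleton p
    obtain ⟨hpH, hpA0⟩ := hp
    obtain ⟨hc1, hc2, hc3⟩ := clA0_bounds hpA0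
    simp only [Hplane, Set.mem_setOf_eq] at hpH
    push_cast at hpH
    rw [hCD] at hpC
    have hcb := closure_ge (fun w hw => le_of_lt hw.2) p hpC
    linarith
  · -- δ case 1, ε = 1, chamber D2
    have hCD : C = D2 a1 a2 := chamber_eq_D2 hC hz hD
    have hkey := S.key_1_1_D2 (act z q) hD.1 hD.2 halc
    refine ⟨by omega, hbru (by omega), fun _ => by omega, fun hncond => ?_⟩
    exact absurd (by rw [hCD]; exact ⟨pA a1 a2, S.sing_a1, S.pA_mem_clD2, S.walls_D2⟩) hncond
  · -- δ case 1, ε = 1, chamber D3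
    have hCD : C = D3 a1 a2 := chamber_eq_D3 hC hz hD
    have hkey := S.key_1_1_D3 (act z q) hD.1 hD.2 halc
    refine ⟨by omega, hbru (by omega), fun hcond => ?_, fun _ => by omega⟩
    exfalso
    obtain ⟨p, hsing, hpC, -⟩ := hcond
    have hp : p ∈ Hplane a1 (1:ℤ) ∩ closure (A0 a1 a2) := by
      rw [hsing]; exact Set.mem_singleton p
    obtain ⟨hpH, hpA0⟩ := hp
    obtain ⟨hc1, hc2, hc3⟩ := clA0_bounds hpA0
    simp only [Hplane, Set.mem_setOf_eq] at hpH
    push_cast at hpH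
    rw [hCD] at hpC
    have hcb := closure_le2 (fun w hw => le_of_lt hw.2) p hpC
    linarith
  · exfalso
    obtain ⟨h1, h2⟩ := hD
    have hs := hside1 rfl _ hz
    linarith
  · exfalso
    obtain ⟨h1, h2⟩ := hD
    have hs := hside1 rfl _ hz
    linarith
  · exfalso
    obtain ⟨h1, h2⟩ := hD
    have hs := hside1 rfl _ hz
    linarith
  · exfalso
    obtain ⟨h1, h2⟩ := hD
    have hs := hside0 rfl _ hz
    linarith
  · -- δ case 2, ε = 0, chamber D2
    have hCD : C = D2 a1 a2 := chamber_eq_D2 hC hz hD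
    have hkey := S.key_2_0_D2 (act z q) hD.1 hD.2 halc
    refine ⟨by omega, hbru (by omega), fun hcond => ?_, fun _ => by omega⟩
    obtain ⟨p, hsing, -, -⟩ := hcond
    exact (S.not_sing_a2 p hsing).elim
  · -- δ case 2, ε = 0, chamber D3
    have hCD : C = D3 a1 a2 := chamber_eq_D3 hC hz hD
    have hkey := S.key_2_0_D3 (act z q) hD.1 hD.2 halc
    refine ⟨by omega, hbru (by omega), fun hcond => ?_, fun _ => by omega⟩
    obtain ⟨p, hsing, -, -⟩ := hcond
    exact (S.not_sing_a2 p hsing).elim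
  · -- δ case 2, ε = 0, chamber D4
    have hCD : C = D4 a1 a2 := chamber_eq_D4 hC hz hD
    have hkey := S.key_2_0_D4 (act z q) hD.1 hD.2 halc
    refine ⟨by omega, hbru (by omega), fun hcond => ?_, fun _ => by omega⟩
    obtain ⟨p, hsing, -, -⟩ := hcond
    exact (S.not_sing_a2 p hsing).elim
  · exfalso
    obtain ⟨h1, h2⟩ := hD
    have hs := hside0 rfl _ hz
    linarith
  · exfalso
    obtain ⟨h1, h2⟩ := hD
    have hs := hside0 rfl _ hz
    linarith
  · -- δ case 2, ε = 1, chamber D1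
    have hCD : C = D1 a1 a2 := chamber_eq_D1 hC hz hD
    have hkey := S.key_2_1_D1 (act z q) hD.1 hD.2 halc
    refine ⟨by omega, hbru (by omega), fun hcond => ?_, fun _ => by omega⟩
    exfalso
    obtain ⟨p, hsing, hpC, -⟩ := hcond
    have hp : p ∈ Hplane a2 (1:ℤ) ∩ closure (A0 a1 a2) := by
      rw [hsing]; exact Set.mem_singleton p
    obtain ⟨hpH, hpA0⟩ := hp
    obtain ⟨hc1, hc2, hc3⟩ := clA0_bounds hpA0
    simp only [Hplane, Set.mem_setOf_eq] at hpH
    push_cast at hpH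
    rw [hCD] at hpC
    have hcb := closure_ge (fun w hw => le_of_lt hw.1) p hpC
    linarith
  · exfalso
    obtain ⟨h1, h2⟩ := hD
    have hs := hside1 rfl _ hz
    linarith
  · exfalso
    obtain ⟨h1, h2⟩ := hD
    have hs := hside1 rfl _ hz
    linarith
  · exfalso
    obtain ⟨h1, h2⟩ := hD
    have hs := hside1 rfl _ hz
    linarith
  · -- δ case 2, ε = 1, chamber D5
    have hCD : C = D5 a1 a2 := chamber_eq_D5 hC hz hD
    have hkey := S.key_2_1_D5 (act z q) hD.1 hD.2 halc
    refine ⟨by omega, hbru (by omega), fun hcond => ?_, fun _ => by omega⟩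
    exfalso
    obtain ⟨p, hsing, hpC, -⟩ := hcond
    have hp : p ∈ Hplane a2 (1:ℤ) ∩ closure (A0 a1 a2) := by
      rw [hsing]; exact Set.mem_singleton p
    obtain ⟨hpH, hpA0⟩ := hp
    obtain ⟨hc1, hc2, hc3⟩ := clA0_bounds hpA0
    simp only [Hplane, Set.mem_setOf_eq] at hpH
    push_cast at hpH
    rw [hCD] at hpC
    have hcb := closure_le2 (fun w hw => le_of_lt hw.2) p hpC
    linarith
  · -- δ case 2, ε = 1, chamber D6
    have hCD : C = D6 a1 a2 := chamber_eq_D6 hC hz hD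
    have hkey := S.key_2_1_D6 (act z q) hD.1 hD.2 halc
    refine ⟨by omega, hbru (by omega), fun _ => by omega, fun hncond => ?_⟩
    exact absurd (by rw [hCD]; exact ⟨pB a1 a2, S.sing_a2, S.pB_mem_clD6, S.walls_D6⟩) hncond
  · exfalso
    obtain ⟨h1, h2⟩ := hD
    have hs := hside0 rfl _ hz
    rw [inner_add_left] at hs
    linarith
  · exfalso
    obtain ⟨h1, h2⟩ := hD
    have hs := hside0 rfl _ hz
    rw [inner_add_left] at hs
    linarith
  · -- δ case 3, ε = 0, chamber D3
    have hCD : C = D3 a1 a2 := chamber_eq_D3 hC hz hD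
    have hkey := S.key_3_0_D3 (act z q) hD.1 hD.2 halc
    refine ⟨by omega, hbru (by omega), fun hcond => ?_, fun _ => by omega⟩
    exfalso
    obtain ⟨p, hsing, hpC, -⟩ := hcond
    have hp : p ∈ Hplane (a1 + a2) (0:ℤ) ∩ closure (A0 a1 a2) := by
      rw [hsing]; exact Set.mem_singleton p
    obtain ⟨hpH, hpA0⟩ := hp
    obtain ⟨hc1, hc2, hc3⟩ := clA0_bounds hpA0
    simp only [Hplane, Set.mem_setOf_eq] at hpH
    rw [inner_add_left] at hpH
    push_cast at hpH
    rw [hCD] at hpC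
    have hcb := closure_ge (fun w hw => le_of_lt hw.1) p hpC
    linarith
  · -- δ case 3, ε = 0, chamber D4
    have hCD : C = D4 a1 a2 := chamber_eq_D4 hC hz hD
    have hkey := S.key_3_0_D4 (act z q) hD.1 hD.2 halc
    refine ⟨by omega, hbru (by omega), fun _ => by omega, fun hncond => ?_⟩
    exact absurd (by rw [hCD]; exact ⟨(0:V), S.sing_a3, S.zero_mem_clD4, S.walls_D4⟩) hncond
  · -- δ case 3, ε = 0, chamber D5
    have hCD : C = D5 a1 a2 := chamber_eq_D5 hC hz hD
    have hkey := S.key_3_0_D5 (act z q) hD.1 hD.2 halc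
    refine ⟨by omega, hbru (by omega), fun hcond => ?_, fun _ => by omega⟩
    exfalso
    obtain ⟨p, hsing, hpC, -⟩ := hcond
    have hp : p ∈ Hplane (a1 + a2) (0:ℤ) ∩ closure (A0 a1 a2) := by
      rw [hsing]; exact Set.mem_singleton p
    obtain ⟨hpH, hpA0⟩ := hp
    obtain ⟨hc1, hc2, hc3⟩ := clA0_bounds hpA0
    simp only [Hplane, Set.mem_setOf_eq] at hpH
    rw [inner_add_left] at hpH
    push_cast at hpH
    rw [hCD] at hpC
    have hcb := closure_ge (fun w hw => le_of_lt hw.1) p hpC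
    linarith
  · exfalso
    obtain ⟨h1, h2⟩ := hD
    have hs := hside0 rfl _ hz
    rw [inner_add_left] at hs
    linarith
  · -- δ case 3, ε = 1, chamber D1
    have hCD : C = D1 a1 a2 := chamber_eq_D1 hC hz hD
    have hkey := S.key_3_1_D1 (act z q) hD.1 hD.2 halc
    refine ⟨by omega, hbru (by omega), fun hcond => ?_, fun _ => by omega⟩
    obtain ⟨p, hsing, -, -⟩ := hcond
    exact (S.not_sing_a3 p hsing).elim
  · -- δ case 3, ε = 1, chamber D2
    have hCD : C = D2 a1 a2 := chamber_eq_D2 hC hz hD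
    have hkey := S.key_3_1_D2 (act z q) hD.1 hD.2 halc
    refine ⟨by omega, hbru (by omega), fun hcond => ?_, fun _ => by omega⟩
    obtain ⟨p, hsing, -, -⟩ := hcond
    exact (S.not_sing_a3 p hsing).elim
  · exfalso
    obtain ⟨h1, h2⟩ := hD
    have hs := hside1 rfl _ hz
    rw [inner_add_left] at hs
    linarith
  · exfalso
    obtain ⟨h1, h2⟩ := hD
    have hs := hside1 rfl _ hz
    rw [inner_add_left] at hs
    linarith
  · exfalso
    obtain ⟨h1, h2⟩ := hD
    have hs := hside1 rfl _ hz
    rw [inner_add_left] at hs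
    linarith
  · -- δ case 3, ε = 1, chamber D6
    have hCD : C = D6 a1 a2 := chamber_eq_D6 hC hz hD
    have hkey := S.key_3_1_D6 (act z q) hD.1 hD.2 halc
    refine ⟨by omega, hbru (by omega), fun hcond => ?_, fun _ => by omega⟩
    obtain ⟨p, hsing, -, -⟩ := hcond
    exact (S.not_sing_a3 p hsing).elim
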